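/- arXiv:1503.08807 — 7 statements merged into one kernel-verified Lean document; each statement's English description precedes it below -/
import Mathlib

section
/- Let c : ℝ → ℝ be smooth and everywhere positive, let Ω ⊆ ℝ² be open, and let u : Ω → ℝ be a C³ function of the variables (x,t) solving the nonlinear wave equation u_tt = c(u)·(c(u)·u_x)_x on Ω. Define R = u_t + c(u)·u_x and S = u_t − c(u)·u_x. Then on Ω the balance laws ∂_t(R²) − ∂_x(c(u)·R²) = (c'(u)/(2c(u)))·(R²·S − R·S²) and ∂_t(S²) + ∂_x(c(u)·S²) = (c'(u)/(2c(u)))·(S²·R − S·R²) hold. -/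
/-- Partial derivative in the first (space) variable `x`. -/
noncomputable def dx1 (f : ℝ × ℝ → ℝ) (P : ℝ × ℝ) : ℝ := fderiv ℝ f P (1, 0)

/-- Partial derivative in the second (time) variable `t`. -/
noncomputable def dt2 (f : ℝ × ℝ → ℝ) (P : ℝ × ℝ) : ℝ := fderiv ℝ f P (0, 1)

/-- the balance laws for `R² ` and `S²` for a `C³` solution of the
nonlinear wave equation `u_tt = c(u)(c(u) u_x)_x` on an open set `Ω`. -/
theorem balance_laws_for_wave_equation
    (c : ℝ → ℝ) (hc : ContDiff ℝ (⊤ : ℕ∞) c) (hcpos : ∀ v, 0 < c v)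
    (Ω : Set (ℝ × ℝ)) (hΩ : IsOpen Ω)
    (u : ℝ × ℝ → ℝ) (hu : ContDiffOn ℝ 3 u Ω)
    (hpde : ∀ P ∈ Ω, dt2 (dt2 u) P = c (u P) * dx1 (fun Q => c (u Q) * dx1 u Q) P)
    (R S : ℝ × ℝ → ℝ)
    (hR : ∀ P, R P = dt2 u P + c (u P) * dx1 u P)
    (hS : ∀ P, S P = dt2 u P - c (u P) * dx1 u P) :
    ∀ P ∈ Ω,
      dt2 (fun Q => R Q ^ 2) P - dx1 (fun Q => c (u Q) * R Q ^ 2) P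
        = deriv c (u P) / (2 * c (u P)) * (R P ^ 2 * S P - R P * S P ^ 2) ∧
      dt2 (fun Q => S Q ^ 2) P + dx1 (fun Q => c (u Q) * S Q ^ 2) P
        = deriv c (u P) / (2 * c (u P)) * (S P ^ 2 * R P - S P * R P ^ 2) := by
  intro P hP
  have hmem : Ω ∈ nhds P := hΩ.mem_nhds hP
  have huP : ContDiffAt ℝ 3 u P := hu.contDiffAt hmem
  have hu2 : ContDiffAt ℝ 2 (fderiv ℝ u) P := huP.fderiv_right (by norm_num)
  have hAd : HasFDerivAt (fderiv ℝ u) (fderiv ℝ (fderiv ℝ u) P) P :=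
    (hu2.differentiableAt (by norm_num)).hasFDerivAt
  set A := fderiv ℝ (fderiv ℝ u) P with hAdef
  have hUd : HasFDerivAt u (fderiv ℝ u P) P :=
    (huP.differentiableAt (by norm_num)).hasFDerivAt
  set U := fderiv ℝ u P with hUdef
  -- derivative of partial-derivative maps
  have hev : ∀ v : ℝ × ℝ, HasFDerivAt (fun Q => fderiv ℝ u Q v)
      ((ContinuousLinearMap.apply ℝ ℝ v).comp A) P := fun v =>
    (ContinuousLinearMap.apply ℝ ℝ v).hasFDerivAt.comp P hAd
  -- derivative of c ∘ u
  have hcd : HasDerivAt c (deriv c (u P)) (u P) :=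
    (hc.differentiable (by simp) (u P)).hasDerivAt
  have hcu : HasFDerivAt (fun Q => c (u Q)) (deriv c (u P) • U) P :=
    hcd.comp_hasFDerivAt P hUd
  -- symmetry of second derivative
  have hsym : A (1, 0) (0, 1) = A (0, 1) (1, 0) :=
    (huP.isSymmSndFDerivAt (by norm_num)) (1, 0) (0, 1)
  -- scalar abbreviations
  set a := U (1, 0) with ha
  set b := U (0, 1) with hb
  set axx := A (1, 0) (1, 0) with haxx
  set axt := A (0, 1) (1, 0) with haxt
  set att := A (0, 1) (0, 1) with hatt
  set cP := c (u P) with hcP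
  set c' := deriv c (u P) with hc'
  -- the PDE in scalar form
  have hpdeP : att = cP * (c' * a * a + cP * axx) := by
    have h1 : dt2 (dt2 u) P = att := by
      show fderiv ℝ (fun Q => fderiv ℝ u Q (0, 1)) P (0, 1) = att
      rw [(hev (0, 1)).fderiv]
      rfl
    have h2 : dx1 (fun Q => c (u Q) * dx1 u Q) P = c' * a * a + cP * axx := by
      show fderiv ℝ (fun Q => c (u Q) * fderiv ℝ u Q (1, 0)) P (1, 0) = c' * a * a + cP * axx
      erw [(hcu.mul (hev (1, 0))).fderiv]
      simp only [ContinuousLinearMap.add_apply, ContinuousLinearMap.smul_apply,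
        ContinuousLinearMap.comp_apply, ContinuousLinearMap.apply_apply, smul_eq_mul]
      ring
    have := hpde P hP
    rw [h1, h2] at this
    exact this
  -- derivatives of R and S
  have hRfun : R = fun Q => fderiv ℝ u Q (0, 1) + c (u Q) * fderiv ℝ u Q (1, 0) :=
    funext fun Q => hR Q
  have hSfun : S = fun Q => fderiv ℝ u Q (0, 1) - c (u Q) * fderiv ℝ u Q (1, 0) :=
    funext fun Q => hS Q
  have hRd := (hev (0, 1)).add (hcu.mul (hev (1, 0)))
  have hSd := (hev (0, 1)).sub (hcu.mul (hev (1, 0)))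
  rw [hRfun, hSfun]
  have hRP : (fun Q => fderiv ℝ u Q (0, 1) + c (u Q) * fderiv ℝ u Q (1, 0)) P
      = b + cP * a := rfl
  have hSP : (fun Q => fderiv ℝ u Q (0, 1) - c (u Q) * fderiv ℝ u Q (1, 0)) P
      = b - cP * a := rfl
  -- squares
  have hR2 := hRd.mul hRd
  have hS2 := hSd.mul hSd
  have hsqR : (fun Q => (fderiv ℝ u Q (0, 1) + c (u Q) * fderiv ℝ u Q (1, 0)) ^ 2)
      = fun Q => (fderiv ℝ u Q (0, 1) + c (u Q) * fderiv ℝ u Q (1, 0)) *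
        (fderiv ℝ u Q (0, 1) + c (u Q) * fderiv ℝ u Q (1, 0)) := by
    funext Q; ring
  have hsqS : (fun Q => (fderiv ℝ u Q (0, 1) - c (u Q) * fderiv ℝ u Q (1, 0)) ^ 2)
      = fun Q => (fderiv ℝ u Q (0, 1) - c (u Q) * fderiv ℝ u Q (1, 0)) *
        (fderiv ℝ u Q (0, 1) - c (u Q) * fderiv ℝ u Q (1, 0)) := by
    funext Q; ring
  have hcR2 := hcu.mul hR2
  have hcS2 := hcu.mul hS2
  have hcpos' : cP ≠ 0 := ne_of_gt (hcpos (u P))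
  constructor
  · have e1 : dt2 (fun Q => (fderiv ℝ u Q (0, 1) + c (u Q) * fderiv ℝ u Q (1, 0)) ^ 2) P
        = fderiv ℝ (fun Q => (fderiv ℝ u Q (0, 1) + c (u Q) * fderiv ℝ u Q (1, 0)) *
            (fderiv ℝ u Q (0, 1) + c (u Q) * fderiv ℝ u Q (1, 0))) P (0, 1) := by
      rw [dt2, hsqR]
    have e2 : dx1 (fun Q => c (u Q) *
          (fderiv ℝ u Q (0, 1) + c (u Q) * fderiv ℝ u Q (1, 0)) ^ 2) P
        = fderiv ℝ (fun Q => c (u Q) *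
            ((fderiv ℝ u Q (0, 1) + c (u Q) * fderiv ℝ u Q (1, 0)) *
             (fderiv ℝ u Q (0, 1) + c (u Q) * fderiv ℝ u Q (1, 0)))) P (1, 0) := by
      rw [dx1]
      have hfg : (fun Q => c (u Q) *
          (fderiv ℝ u Q (0, 1) + c (u Q) * fderiv ℝ u Q (1, 0)) ^ 2)
          = fun Q => c (u Q) *
            ((fderiv ℝ u Q (0, 1) + c (u Q) * fderiv ℝ u Q (1, 0)) *
             (fderiv ℝ u Q (0, 1) + c (u Q) * fderiv ℝ u Q (1, 0))) := by
        funext Q; ring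
      rw [hfg]
    erw [e1, e2, hR2.fderiv, hcR2.fderiv, hRP, hSP]
    simp only [ContinuousLinearMap.add_apply, ContinuousLinearMap.smul_apply,
      ContinuousLinearMap.comp_apply, ContinuousLinearMap.apply_apply, smul_eq_mul,
      Pi.add_apply, Pi.sub_apply, Pi.mul_apply,
      ← hUdef, ← hAdef, ← ha, ← hb, ← haxx, ← haxt, ← hatt, ← hcP, ← hc', hsym]
    rw [div_mul_eq_mul_div, eq_div_iff (mul_ne_zero two_ne_zero hcpos')]
    linear_combination (4 * cP * (b + cP * a)) * hpdeP
  · have e1 : dt2 (fun Q => (fderiv ℝ u Q (0, 1) - c (u Q) * fderiv ℝ u Q (1, 0)) ^ 2) P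
        = fderiv ℝ (fun Q => (fderiv ℝ u Q (0, 1) - c (u Q) * fderiv ℝ u Q (1, 0)) *
            (fderiv ℝ u Q (0, 1) - c (u Q) * fderiv ℝ u Q (1, 0))) P (0, 1) := by
      rw [dt2, hsqS]
    have e2 : dx1 (fun Q => c (u Q) *
          (fderiv ℝ u Q (0, 1) - c (u Q) * fderiv ℝ u Q (1, 0)) ^ 2) P
        = fderiv ℝ (fun Q => c (u Q) *
            ((fderiv ℝ u Q (0, 1) - c (u Q) * fderiv ℝ u Q (1, 0)) *
             (fderiv ℝ u Q (0, 1) - c (u Q) * fderiv ℝ u Q (1, 0)))) P (1, 0) := by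
      rw [dx1]
      have hfg : (fun Q => c (u Q) *
          (fderiv ℝ u Q (0, 1) - c (u Q) * fderiv ℝ u Q (1, 0)) ^ 2)
          = fun Q => c (u Q) *
            ((fderiv ℝ u Q (0, 1) - c (u Q) * fderiv ℝ u Q (1, 0)) *
             (fderiv ℝ u Q (0, 1) - c (u Q) * fderiv ℝ u Q (1, 0))) := by
        funext Q; ring
      rw [hfg]
    erw [e1, e2, hS2.fderiv, hcS2.fderiv, hRP, hSP]
    simp only [ContinuousLinearMap.add_apply, ContinuousLinearMap.sub_apply,
      ContinuousLinearMap.smul_apply,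
      ContinuousLinearMap.comp_apply, ContinuousLinearMap.apply_apply, smul_eq_mul,
      Pi.add_apply, Pi.sub_apply, Pi.mul_apply,
      ← hUdef, ← hAdef, ← ha, ← hb, ← haxx, ← haxt, ← hatt, ← hcP, ← hc', hsym]
    rw [div_mul_eq_mul_div, eq_div_iff (mul_ne_zero two_ne_zero hcpos')]
    linear_combination (4 * cP * (b - cP * a)) * hpdeP
end

section
/- Let c : ℝ → ℝ be smooth with c(v) ≥ c₀ > 0, and let u, w, z, p, q, x, t : ℝ² → ℝ be smooth functions solving the semilinear system. Let (X₀,Y₀) ∈ ℝ² be a point where cos w(X₀,Y₀) > −1, cos z(X₀,Y₀) > −1, p(X₀,Y₀) > 0 and q(X₀,Y₀) > 0. Then the map Λ(X,Y) = (x(X,Y), t(X,Y)) is a local C^∞ diffeomorphism at (X₀,Y₀): there is an open neighborhood U of (X₀,Y₀) such that Λ is injective on U, Λ(U) is open, and the inverse map Λ(U) → U is smooth. -/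
/-- Partial derivative in the `X`-direction. -/
noncomputable def dX (f : ℝ × ℝ → ℝ) (P : ℝ × ℝ) : ℝ := fderiv ℝ f P (1, 0)

/-- Partial derivative in the `Y`-direction. -/
noncomputable def dY (f : ℝ × ℝ → ℝ) (P : ℝ × ℝ) : ℝ := fderiv ℝ f P (0, 1)

/-- The semilinear system associated with the wave equation
`u_tt - c(u)(c(u)u_x)_x = 0`, in characteristic coordinates `(X,Y)`. -/
def SolvesSystem (c : ℝ → ℝ) (u w z p q x t : ℝ × ℝ → ℝ) : Prop :=
  ∀ P : ℝ × ℝ,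
    dX u P = Real.sin (w P) * p P / (4 * c (u P)) ∧
    dY u P = Real.sin (z P) * q P / (4 * c (u P)) ∧
    dY w P = deriv c (u P) / (8 * c (u P) ^ 2) * (Real.cos (z P) - Real.cos (w P)) * q P ∧
    dX z P = deriv c (u P) / (8 * c (u P) ^ 2) * (Real.cos (w P) - Real.cos (z P)) * p P ∧
    dY p P = deriv c (u P) / (8 * c (u P) ^ 2) * (Real.sin (z P) - Real.sin (w P)) * (p P * q P) ∧
    dX q P = deriv c (u P) / (8 * c (u P) ^ 2) * (Real.sin (w P) - Real.sin (z P)) * (p P * q P) ∧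
    dX x P = (1 + Real.cos (w P)) * p P / 4 ∧
    dY x P = -((1 + Real.cos (z P)) * q P) / 4 ∧
    dX t P = (1 + Real.cos (w P)) * p P / (4 * c (u P)) ∧
    dY t P = (1 + Real.cos (z P)) * q P / (4 * c (u P))

/-- All seven components are smooth on the whole plane. -/
def Smooth7 (u w z p q x t : ℝ × ℝ → ℝ) : Prop :=
  ContDiff ℝ (⊤ : ℕ∞) u ∧ ContDiff ℝ (⊤ : ℕ∞) w ∧ ContDiff ℝ (⊤ : ℕ∞) z ∧
  ContDiff ℝ (⊤ : ℕ∞) p ∧ ContDiff ℝ (⊤ : ℕ∞) q ∧ ContDiff ℝ (⊤ : ℕ∞) x ∧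
  ContDiff ℝ (⊤ : ℕ∞) t

set_option maxHeartbeats 1000000 in
/-- at a point where `cos w > -1`, `cos z > -1`, `p > 0`, `q > 0`,
the map `Λ(X,Y) = (x(X,Y), t(X,Y))` is a local smooth diffeomorphism. -/
theorem local_diffeomorphism
    (c : ℝ → ℝ) (c₀ : ℝ) (hc₀ : 0 < c₀) (hc : ContDiff ℝ (⊤ : ℕ∞) c)
    (hclb : ∀ v, c₀ ≤ c v)
    (u w z p q x t : ℝ × ℝ → ℝ)
    (hsmooth : Smooth7 u w z p q x t)
    (hsys : SolvesSystem c u w z p q x t)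
    (X₀ Y₀ : ℝ)
    (hw : Real.cos (w (X₀, Y₀)) > -1)
    (hz : Real.cos (z (X₀, Y₀)) > -1)
    (hp : p (X₀, Y₀) > 0) (hq : q (X₀, Y₀) > 0) :
    ∃ U : Set (ℝ × ℝ), IsOpen U ∧ (X₀, Y₀) ∈ U ∧
      Set.InjOn (fun P => (x P, t P)) U ∧
      IsOpen ((fun P => (x P, t P)) '' U) ∧
      ∃ g : ℝ × ℝ → ℝ × ℝ,
        ContDiffOn ℝ (⊤ : ℕ∞) g ((fun P => (x P, t P)) '' U) ∧
        ∀ P ∈ U, g (x P, t P) = P := by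
  obtain ⟨hu, hwS, hzS, hpS, hqS, hxS, htS⟩ := hsmooth
  set Λ : ℝ × ℝ → ℝ × ℝ := fun P => (x P, t P) with hΛdef
  have hΛ : ContDiff ℝ (⊤ : ℕ∞) Λ := hxS.prodMk htS
  set V : Set (ℝ × ℝ) :=
    {P | -1 < Real.cos (w P) ∧ -1 < Real.cos (z P) ∧ 0 < p P ∧ 0 < q P} with hVdef
  have hVopen : IsOpen V := by
    have h1 : IsOpen {P : ℝ × ℝ | -1 < Real.cos (w P)} :=
      isOpen_lt continuous_const (Real.continuous_cos.comp hwS.continuous)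
    have h2 : IsOpen {P : ℝ × ℝ | -1 < Real.cos (z P)} :=
      isOpen_lt continuous_const (Real.continuous_cos.comp hzS.continuous)
    have h3 : IsOpen {P : ℝ × ℝ | 0 < p P} := isOpen_lt continuous_const hpS.continuous
    have h4 : IsOpen {P : ℝ × ℝ | 0 < q P} := isOpen_lt continuous_const hqS.continuous
    have : V = ({P : ℝ × ℝ | -1 < Real.cos (w P)} ∩ {P | -1 < Real.cos (z P)}) ∩
        ({P : ℝ × ℝ | 0 < p P} ∩ {P | 0 < q P}) := by
      ext P; simp [hVdef, Set.mem_setOf_eq]; tauto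
    rw [this]; exact (h1.inter h2).inter (h3.inter h4)
  have hP₀V : (X₀, Y₀) ∈ V := ⟨hw, hz, hp, hq⟩
  have h1top : (1 : WithTop ℕ∞) ≤ ((⊤ : ℕ∞) : WithTop ℕ∞) := by exact_mod_cast le_top
  -- derivative of Λ
  have hdx : ∀ P, HasFDerivAt x (fderiv ℝ x P) P :=
    fun P => (hxS.differentiable (by simp) P).hasFDerivAt
  have hdt : ∀ P, HasFDerivAt t (fderiv ℝ t P) P :=
    fun P => (htS.differentiable (by simp) P).hasFDerivAt
  have hdΛ : ∀ P, HasFDerivAt Λ ((fderiv ℝ x P).prod (fderiv ℝ t P)) P :=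
    fun P => (hdx P).prodMk (hdt P)
  have happly : ∀ (f : ℝ × ℝ →L[ℝ] ℝ) (v : ℝ × ℝ),
      f v = v.1 * f (1, 0) + v.2 * f (0, 1) := by
    intro f v
    have hv : v = v.1 • ((1 : ℝ), (0 : ℝ)) + v.2 • ((0 : ℝ), (1 : ℝ)) := by
      ext <;> simp
    calc f v = f (v.1 • ((1 : ℝ), (0 : ℝ)) + v.2 • ((0 : ℝ), (1 : ℝ))) := by rw [← hv]
      _ = v.1 * f (1, 0) + v.2 * f (0, 1) := by
        rw [map_add, map_smul, map_smul]; simp [smul_eq_mul]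
  -- at each point of V, the derivative of Λ is a continuous linear equivalence
  have hkey : ∀ P ∈ V, ∃ e : (ℝ × ℝ) ≃L[ℝ] (ℝ × ℝ),
      (e : (ℝ × ℝ) →L[ℝ] (ℝ × ℝ)) = (fderiv ℝ x P).prod (fderiv ℝ t P) := by
    intro P hP
    obtain ⟨hPw, hPz, hPp, hPq⟩ := hP
    set L : (ℝ × ℝ) →L[ℝ] (ℝ × ℝ) := (fderiv ℝ x P).prod (fderiv ℝ t P) with hLdef
    have hC : 0 < c (u P) := lt_of_lt_of_le hc₀ (hclb _)
    have hA : 0 < (1 + Real.cos (w P)) * p P := by nlinarith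
    have hB : 0 < (1 + Real.cos (z P)) * q P := by nlinarith
    obtain ⟨-, -, -, -, -, -, hxX, hxY, htX, htY⟩ := hsys P
    have hinj : Function.Injective L := by
      rw [injective_iff_map_eq_zero]
      intro v hv
      have h1 : (L v).1 = 0 := by rw [hv]; rfl
      have h2 : (L v).2 = 0 := by rw [hv]; rfl
      have e1 : v.1 * dX x P + v.2 * dY x P = 0 := by
        have := happly (fderiv ℝ x P) v
        simpa [hLdef, dX, dY, ← this] using h1
      have e2 : v.1 * dX t P + v.2 * dY t P = 0 := by
        have := happly (fderiv ℝ t P) v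
        simpa [hLdef, dX, dY, ← this] using h2
      rw [hxX, hxY] at e1
      rw [htX, htY] at e2
      have e2' : v.1 * ((1 + Real.cos (w P)) * p P) + v.2 * ((1 + Real.cos (z P)) * q P)
          = 0 := by
        field_simp at e2
        nlinarith [e2]
      have e1' : v.1 * ((1 + Real.cos (w P)) * p P) - v.2 * ((1 + Real.cos (z P)) * q P)
          = 0 := by nlinarith [e1]
      have hv2 : v.2 = 0 := by
        have h2B : v.2 * ((1 + Real.cos (z P)) * q P) = 0 := by linarith
        rcases mul_eq_zero.mp h2B with h | h
        · exact h
        · exact absurd h (ne_of_gt hB)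
      have hv1 : v.1 = 0 := by
        have h1A : v.1 * ((1 + Real.cos (w P)) * p P) = 0 := by
          rw [hv2] at e1'; linarith
        rcases mul_eq_zero.mp h1A with h | h
        · exact h
        · exact absurd h (ne_of_gt hA)
      ext <;> assumption
    have hsurj : Function.Surjective L :=
      (LinearMap.injective_iff_surjective (f := (L : (ℝ × ℝ) →ₗ[ℝ] (ℝ × ℝ)))).mp hinj
    refine ⟨(LinearEquiv.ofBijective (L : (ℝ × ℝ) →ₗ[ℝ] (ℝ × ℝ))
      ⟨hinj, hsurj⟩).toContinuousLinearEquiv, ContinuousLinearMap.ext fun v => ?_⟩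
    simp [LinearEquiv.coe_toContinuousLinearEquiv]; rfl
  -- inverse function theorem at the base point
  obtain ⟨e₀, he₀⟩ := hkey (X₀, Y₀) hP₀V
  have hf' : HasFDerivAt Λ (e₀ : (ℝ × ℝ) →L[ℝ] (ℝ × ℝ)) (X₀, Y₀) := by
    rw [he₀]; exact hdΛ (X₀, Y₀)
  have hΛat : ContDiffAt ℝ (⊤ : ℕ∞) Λ (X₀, Y₀) := hΛ.contDiffAt
  have hn : ((⊤ : ℕ∞) : WithTop ℕ∞) ≠ 0 := by simp
  set Φ := hΛat.toOpenPartialHomeomorph Λ hf' hn with hΦdef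
  have hΦcoe : (Φ : ℝ × ℝ → ℝ × ℝ) = Λ := rfl
  have hmem : (X₀, Y₀) ∈ Φ.source := hΛat.mem_toOpenPartialHomeomorph_source hf' hn
  refine ⟨Φ.source ∩ V, Φ.open_source.inter hVopen, ⟨hmem, hP₀V⟩, ?_, ?_, ?_⟩
  · exact Φ.injOn.mono Set.inter_subset_left
  · exact Φ.isOpen_image_of_subset_source (Φ.open_source.inter hVopen)
      Set.inter_subset_left
  · refine ⟨Φ.symm, ?_, fun P hP => Φ.left_inv hP.1⟩
    intro y hy
    obtain ⟨P, hPU, rfl⟩ := hy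
    have hyt : Λ P ∈ Φ.target := Φ.map_source hPU.1
    obtain ⟨e, he⟩ := hkey P hPU.2
    have hlp : Φ.symm (Λ P) = P := Φ.left_inv hPU.1
    have hfe : HasFDerivAt Λ (e : (ℝ × ℝ) →L[ℝ] (ℝ × ℝ)) (Φ.symm (Λ P)) := by
      rw [hlp, he]; exact hdΛ P
    have : ContDiffAt ℝ (⊤ : ℕ∞) Φ.symm (Λ P) :=
      Φ.contDiffAt_symm hyt hfe (by rw [hlp]; exact hΛ.contDiffAt)
    exact this.contDiffWithinAt
end

section
/- Let c : ℝ → ℝ be smooth with c(v) ≥ c₀ > 0, and let u, w, z, p, q, x, t : ℝ² → ℝ be smooth functions solving the semilinear system. Let (X₀,Y₀) be a point where w(X₀,Y₀) = π, and write u₀ = u(X₀,Y₀), z₀ = z(X₀,Y₀), p₀ = p(X₀,Y₀), q₀ = q(X₀,Y₀). Then at (X₀,Y₀): t_X = 0; t_Y = (1+cos z₀)·q₀/(4c(u₀)); t_XX = 0; t_XY = 0; and t_XXX = w_X(X₀,Y₀)²·p₀/(4c(u₀)). -/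
private lemma fd_mul (f g : ℝ × ℝ → ℝ) (P v : ℝ × ℝ)
    (hf : DifferentiableAt ℝ f P) (hg : DifferentiableAt ℝ g P) :
    fderiv ℝ (fun Q => f Q * g Q) P v
      = fderiv ℝ f P v * g P + f P * fderiv ℝ g P v := by
  rw [fderiv_fun_mul hf hg]
  simp only [ContinuousLinearMap.add_apply, ContinuousLinearMap.smul_apply, smul_eq_mul]
  ring

private lemma fd_cos (w : ℝ × ℝ → ℝ) (P v : ℝ × ℝ) (hw : DifferentiableAt ℝ w P) :
    fderiv ℝ (fun Q => Real.cos (w Q)) P v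
      = -Real.sin (w P) * fderiv ℝ w P v := by
  have h := (Real.hasDerivAt_cos (w P)).comp_hasFDerivAt P hw.hasFDerivAt
  have h2 : fderiv ℝ (fun Q => Real.cos (w Q)) P = -Real.sin (w P) • fderiv ℝ w P := h.fderiv
  rw [h2]; simp

private lemma fd_sin (w : ℝ × ℝ → ℝ) (P v : ℝ × ℝ) (hw : DifferentiableAt ℝ w P) :
    fderiv ℝ (fun Q => Real.sin (w Q)) P v
      = Real.cos (w P) * fderiv ℝ w P v := by
  have h := (Real.hasDerivAt_sin (w P)).comp_hasFDerivAt P hw.hasFDerivAt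
  have h2 : fderiv ℝ (fun Q => Real.sin (w Q)) P = Real.cos (w P) • fderiv ℝ w P := h.fderiv
  rw [h2]; simp

/-- partial derivatives of `t` at a point where `w = π`. -/
theorem t_derivatives_at_type1_point
    (c : ℝ → ℝ) (c₀ : ℝ) (hc₀ : 0 < c₀) (hc : ContDiff ℝ (⊤ : ℕ∞) c)
    (hclb : ∀ v, c₀ ≤ c v)
    (u w z p q x t : ℝ × ℝ → ℝ)
    (hsmooth : Smooth7 u w z p q x t)
    (hsys : SolvesSystem c u w z p q x t)
    (X₀ Y₀ : ℝ) (hwπ : w (X₀, Y₀) = Real.pi)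
    (u₀ z₀ p₀ q₀ : ℝ)
    (hu₀ : u₀ = u (X₀, Y₀)) (hz₀ : z₀ = z (X₀, Y₀))
    (hp₀ : p₀ = p (X₀, Y₀)) (hq₀ : q₀ = q (X₀, Y₀)) :
    dX t (X₀, Y₀) = 0 ∧
    dY t (X₀, Y₀) = (1 + Real.cos z₀) * q₀ / (4 * c u₀) ∧
    dX (dX t) (X₀, Y₀) = 0 ∧
    dY (dX t) (X₀, Y₀) = 0 ∧
    dX (dX (dX t)) (X₀, Y₀) = dX w (X₀, Y₀) ^ 2 * p₀ / (4 * c u₀) := by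
  obtain ⟨hu, hw, hz, hp, hq, hx, ht⟩ := hsmooth
  set P₀ : ℝ × ℝ := (X₀, Y₀) with hP₀def
  -- basic smoothness facts
  have hcu : ContDiff ℝ (⊤ : ℕ∞) (fun Q : ℝ × ℝ => c (u Q)) := hc.comp hu
  have hcune : ∀ Q : ℝ × ℝ, (4 : ℝ) * c (u Q) ≠ 0 := by
    intro Q
    have : (0:ℝ) < c (u Q) := lt_of_lt_of_le hc₀ (hclb (u Q))
    positivity
  set A : ℝ × ℝ → ℝ := fun Q => 1 + Real.cos (w Q) with hA_def
  set B : ℝ × ℝ → ℝ := fun Q => p Q / (4 * c (u Q)) with hB_def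
  have h1top : ((⊤:ℕ∞) : WithTop ℕ∞) ≠ 0 := by simp
  have hA : ContDiff ℝ (⊤ : ℕ∞) A := contDiff_const.add (Real.contDiff_cos.comp hw)
  have hB : ContDiff ℝ (⊤ : ℕ∞) B := hp.div (contDiff_const.mul hcu) hcune
  have hAd : ∀ Q, DifferentiableAt ℝ A Q := fun Q => (hA.differentiable h1top) Q
  have hBd : ∀ Q, DifferentiableAt ℝ B Q := fun Q => (hB.differentiable h1top) Q
  have hwd : ∀ Q, DifferentiableAt ℝ w Q := fun Q => (hw.differentiable h1top) Q
  have hsin0 : Real.sin (w P₀) = 0 := by rw [hwπ, Real.sin_pi]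
  have hcosπ : Real.cos (w P₀) = -1 := by rw [hwπ, Real.cos_pi]
  have hA0 : A P₀ = 0 := by rw [hA_def]; simp [hwπ]
  -- t_X agrees with A * B everywhere
  have htX : dX t = fun Q => A Q * B Q := by
    funext Q
    rw [(hsys Q).2.2.2.2.2.2.2.2.1]
    rw [hA_def, hB_def, mul_div_assoc]
  -- fderiv of A in any direction
  have hfdA : ∀ Q v, fderiv ℝ A Q v = -Real.sin (w Q) * fderiv ℝ w Q v := by
    intro Q v
    rw [hA_def]
    rw [show fderiv ℝ (fun Q => 1 + Real.cos (w Q)) Q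
        = fderiv ℝ (fun Q => Real.cos (w Q)) Q from fderiv_const_add 1]
    exact fd_cos w Q v (hwd Q)
  -- fderiv of A*B in any direction
  have hfdAB : ∀ Q v, fderiv ℝ (fun Q => A Q * B Q) Q v
      = -Real.sin (w Q) * fderiv ℝ w Q v * B Q + A Q * fderiv ℝ B Q v := by
    intro Q v
    rw [fd_mul A B Q v (hAd Q) (hBd Q), hfdA]
  refine ⟨?_, ?_, ?_, ?_, ?_⟩
  · rw [show dX t P₀ = A P₀ * B P₀ from congrFun htX P₀, hA0, zero_mul]
  · rw [(hsys P₀).2.2.2.2.2.2.2.2.2, hu₀, hz₀, hq₀]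
  · show fderiv ℝ (dX t) P₀ (1, 0) = 0
    rw [htX, hfdAB, hsin0, hA0]; ring
  · show fderiv ℝ (dX t) P₀ (0, 1) = 0
    rw [htX, hfdAB, hsin0, hA0]; ring
  · -- third derivative
    set W : ℝ × ℝ → ℝ := fun Q => fderiv ℝ w Q (1, 0) with hW_def
    set DB : ℝ × ℝ → ℝ := fun Q => fderiv ℝ B Q (1, 0) with hDB_def
    have htop : ((⊤:ℕ∞) : WithTop ℕ∞) + 1 ≤ ((⊤:ℕ∞) : WithTop ℕ∞) := by simp
    have hW : ContDiff ℝ (⊤ : ℕ∞) W := (hw.fderiv_right htop).clm_apply contDiff_const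
    have hDB : ContDiff ℝ (⊤ : ℕ∞) DB := (hB.fderiv_right htop).clm_apply contDiff_const
    have hsinw : ContDiff ℝ (⊤ : ℕ∞) (fun Q : ℝ × ℝ => -Real.sin (w Q)) :=
      (Real.contDiff_sin.comp hw).neg
    -- dX (A*B) = G
    have hG : dX (fun Q => A Q * B Q)
        = fun Q => (-Real.sin (w Q) * W Q) * B Q + A Q * DB Q := by
      funext Q
      show fderiv ℝ (fun Q => A Q * B Q) Q (1, 0) = _
      rw [hfdAB]
    rw [show dX (dX t) = dX (fun Q => A Q * B Q) from by rw [htX]]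
    rw [hG]
    show fderiv ℝ (fun Q => (-Real.sin (w Q) * W Q) * B Q + A Q * DB Q) P₀ (1, 0) = _
    have hterm1 : DifferentiableAt ℝ (fun Q => -Real.sin (w Q) * W Q) P₀ :=
      ((hsinw.mul hW).differentiable h1top) P₀
    have hterm1' : DifferentiableAt ℝ (fun Q => (-Real.sin (w Q) * W Q) * B Q) P₀ :=
      (((hsinw.mul hW).mul hB).differentiable h1top) P₀
    have hterm2 : DifferentiableAt ℝ (fun Q => A Q * DB Q) P₀ :=
      ((hA.mul hDB).differentiable h1top) P₀
    rw [show fderiv ℝ (fun Q => (-Real.sin (w Q) * W Q) * B Q + A Q * DB Q) P₀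
        = fderiv ℝ (fun Q => (-Real.sin (w Q) * W Q) * B Q) P₀
          + fderiv ℝ (fun Q => A Q * DB Q) P₀ from fderiv_fun_add hterm1' hterm2]
    rw [ContinuousLinearMap.add_apply]
    rw [fd_mul _ B P₀ (1,0) hterm1 (hBd P₀)]
    rw [fd_mul _ W P₀ (1,0) ((hsinw.differentiable h1top) P₀)
        ((hW.differentiable h1top) P₀)]
    rw [fd_mul A DB P₀ (1,0) (hAd P₀) ((hDB.differentiable h1top) P₀)]
    rw [show fderiv ℝ (fun Q => -Real.sin (w Q)) P₀
        = -fderiv ℝ (fun Q => Real.sin (w Q)) P₀ from fderiv_neg]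
    rw [ContinuousLinearMap.neg_apply]
    rw [fd_sin w P₀ (1,0) (hwd P₀)]
    rw [hfdA]
    rw [hsin0, hcosπ, hA0]
    have hWP : W P₀ = dX w P₀ := rfl
    have hBP : B P₀ = p₀ / (4 * c u₀) := by rw [hB_def, hp₀, hu₀]
    rw [hWP, hBP]
    simp only [dX]
    ring
end

section
/- Let c : ℝ → ℝ be smooth with c(v) ≥ c₀ > 0, and let u, w, z, p, q, x, t : ℝ² → ℝ be smooth functions solving the semilinear system. Let (X₀,Y₀) be a point where w(X₀,Y₀) = π, and write z₀ = z(X₀,Y₀), p₀ = p(X₀,Y₀), q₀ = q(X₀,Y₀). Then at (X₀,Y₀): x_X = 0; x_Y = −(1+cos z₀)·q₀/4; x_XX = 0; x_XY = 0; and x_XXX = w_X(X₀,Y₀)²·p₀/4. -/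
private lemma aux_one_le : (1 : WithTop ℕ∞) ≤ ((⊤ : ℕ∞) : WithTop ℕ∞) := by
  exact_mod_cast le_top

private lemma aux_add_one_le : ((⊤ : ℕ∞) : WithTop ℕ∞) + 1 ≤ ((⊤ : ℕ∞) : WithTop ℕ∞) := by
  exact_mod_cast le_top

private lemma contDiff_sliceX {f : ℝ × ℝ → ℝ} (hf : ContDiff ℝ (⊤:ℕ∞) f) (b : ℝ) :
    ContDiff ℝ (⊤:ℕ∞) (fun s : ℝ => f (s, b)) :=
  hf.comp (contDiff_id.prodMk contDiff_const)

private lemma contDiff_sliceY {f : ℝ × ℝ → ℝ} (hf : ContDiff ℝ (⊤:ℕ∞) f) (a : ℝ) :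
    ContDiff ℝ (⊤:ℕ∞) (fun s : ℝ => f (a, s)) :=
  hf.comp (contDiff_const.prodMk contDiff_id)

private lemma dX_eq_deriv {f : ℝ × ℝ → ℝ} (hf : ContDiff ℝ (⊤:ℕ∞) f) (a b : ℝ) :
    dX f (a, b) = deriv (fun s : ℝ => f (s, b)) a := by
  have hL : HasDerivAt (fun s : ℝ => ((s, b) : ℝ × ℝ)) ((1 : ℝ), (0 : ℝ)) a :=
    (hasDerivAt_id a).prodMk (hasDerivAt_const a b)
  have h := ((hf.differentiable (by simp)) (a, b)).hasFDerivAt.comp_hasDerivAt a hL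
  exact (h.deriv).symm

private lemma dY_eq_deriv {f : ℝ × ℝ → ℝ} (hf : ContDiff ℝ (⊤:ℕ∞) f) (a b : ℝ) :
    dY f (a, b) = deriv (fun s : ℝ => f (a, s)) b := by
  have hL : HasDerivAt (fun s : ℝ => ((a, s) : ℝ × ℝ)) ((0 : ℝ), (1 : ℝ)) b :=
    (hasDerivAt_const b a).prodMk (hasDerivAt_id b)
  have h := ((hf.differentiable (by simp)) (a, b)).hasFDerivAt.comp_hasDerivAt b hL
  exact (h.deriv).symm

private lemma contDiff_dX {f : ℝ × ℝ → ℝ} (hf : ContDiff ℝ (⊤:ℕ∞) f) :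
    ContDiff ℝ (⊤:ℕ∞) (dX f) :=
  (hf.fderiv_right aux_add_one_le).clm_apply contDiff_const

private lemma derivG {f g : ℝ → ℝ} (hf : ContDiff ℝ (⊤:ℕ∞) f) (hg : ContDiff ℝ (⊤:ℕ∞) g)
    (s : ℝ) :
    deriv (fun r => (1 + Real.cos (f r)) * g r / 4) s
      = (-Real.sin (f s) * deriv f s * g s + (1 + Real.cos (f s)) * deriv g s) / 4 := by
  have hfd : HasDerivAt f (deriv f s) s := ((hf.differentiable (by simp)) s).hasDerivAt
  have hgd : HasDerivAt g (deriv g s) s := ((hg.differentiable (by simp)) s).hasDerivAt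
  have hcos : HasDerivAt (fun r => 1 + Real.cos (f r)) (-Real.sin (f s) * deriv f s) s := by
    have h := (Real.hasDerivAt_cos (f s)).comp s hfd
    exact ((hasDerivAt_const s (1:ℝ)).add h).congr_deriv (by ring)
  have h := (hcos.mul hgd).div_const 4
  exact h.deriv

private lemma deriv2G {f g : ℝ → ℝ} (hf : ContDiff ℝ (⊤:ℕ∞) f) (hg : ContDiff ℝ (⊤:ℕ∞) g)
    (s₀ : ℝ) (hπ : f s₀ = Real.pi) :
    deriv (deriv (fun r => (1 + Real.cos (f r)) * g r / 4)) s₀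
      = deriv f s₀ ^ 2 * g s₀ / 4 := by
  have heq : deriv (fun r => (1 + Real.cos (f r)) * g r / 4)
      = fun s => (-Real.sin (f s) * deriv f s * g s + (1 + Real.cos (f s)) * deriv g s) / 4 :=
    funext (derivG hf hg)
  rw [heq]
  have hf' : ContDiff ℝ (⊤:ℕ∞) (deriv f) := (contDiff_infty_iff_deriv.mp hf).2
  have hg' : ContDiff ℝ (⊤:ℕ∞) (deriv g) := (contDiff_infty_iff_deriv.mp hg).2
  have hfd : HasDerivAt f (deriv f s₀) s₀ := ((hf.differentiable (by simp)) s₀).hasDerivAt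
  have hgd : HasDerivAt g (deriv g s₀) s₀ := ((hg.differentiable (by simp)) s₀).hasDerivAt
  have hfd2 : HasDerivAt (deriv f) (deriv (deriv f) s₀) s₀ :=
    ((hf'.differentiable (by simp)) s₀).hasDerivAt
  have hgd2 : HasDerivAt (deriv g) (deriv (deriv g) s₀) s₀ :=
    ((hg'.differentiable (by simp)) s₀).hasDerivAt
  have hsin : HasDerivAt (fun s => Real.sin (f s)) (Real.cos (f s₀) * deriv f s₀) s₀ :=
    (Real.hasDerivAt_sin (f s₀)).comp s₀ hfd
  have hcos : HasDerivAt (fun s => 1 + Real.cos (f s)) (-Real.sin (f s₀) * deriv f s₀) s₀ := by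
    have h := (Real.hasDerivAt_cos (f s₀)).comp s₀ hfd
    exact ((hasDerivAt_const s₀ (1:ℝ)).add h).congr_deriv (by ring)
  have hA : HasDerivAt (fun s => -Real.sin (f s) * deriv f s * g s)
      ((-(Real.cos (f s₀) * deriv f s₀) * deriv f s₀ + -Real.sin (f s₀) * deriv (deriv f) s₀)
        * g s₀ + -Real.sin (f s₀) * deriv f s₀ * deriv g s₀) s₀ :=
    ((hsin.neg.mul hfd2).mul hgd)
  have hB : HasDerivAt (fun s => (1 + Real.cos (f s)) * deriv g s)
      (-Real.sin (f s₀) * deriv f s₀ * deriv g s₀ + (1 + Real.cos (f s₀)) * deriv (deriv g) s₀)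
      s₀ := hcos.mul hgd2
  have h := (hA.add hB).div_const 4
  rw [HasDerivAt.deriv (f := fun s => (-Real.sin (f s) * deriv f s * g s + (1 + Real.cos (f s)) * deriv g s) / 4) h, hπ]
  simp [Real.sin_pi, Real.cos_pi]
  exact Or.inl (by ring)

/-- partial derivatives of `x` at a point where `w = π`. -/
theorem x_derivatives_at_type1_point
    (c : ℝ → ℝ) (c₀ : ℝ) (hc₀ : 0 < c₀) (hc : ContDiff ℝ (⊤ : ℕ∞) c)
    (hclb : ∀ v, c₀ ≤ c v)
    (u w z p q x t : ℝ × ℝ → ℝ)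
    (hsmooth : Smooth7 u w z p q x t)
    (hsys : SolvesSystem c u w z p q x t)
    (X₀ Y₀ : ℝ) (hwπ : w (X₀, Y₀) = Real.pi)
    (z₀ p₀ q₀ : ℝ)
    (hz₀ : z₀ = z (X₀, Y₀)) (hp₀ : p₀ = p (X₀, Y₀)) (hq₀ : q₀ = q (X₀, Y₀)) :
    dX x (X₀, Y₀) = 0 ∧
    dY x (X₀, Y₀) = -((1 + Real.cos z₀) * q₀) / 4 ∧
    dX (dX x) (X₀, Y₀) = 0 ∧
    dY (dX x) (X₀, Y₀) = 0 ∧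
    dX (dX (dX x)) (X₀, Y₀) = dX w (X₀, Y₀) ^ 2 * p₀ / 4 := by
  obtain ⟨hu, hw, hz, hp, hq, hx, ht⟩ := hsmooth
  set g : ℝ × ℝ → ℝ := fun P => (1 + Real.cos (w P)) * p P / 4 with hgdef
  have hgfun : dX x = g := funext fun P => (hsys P).2.2.2.2.2.2.1
  have hgsmooth : ContDiff ℝ (⊤:ℕ∞) g :=
    ((contDiff_const.add (Real.contDiff_cos.comp hw)).mul hp).div_const 4
  refine ⟨?_, ?_, ?_, ?_, ?_⟩
  · rw [(hsys (X₀, Y₀)).2.2.2.2.2.2.1, hwπ]; simp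
  · rw [(hsys (X₀, Y₀)).2.2.2.2.2.2.2.1, ← hz₀, ← hq₀]
  · rw [hgfun, dX_eq_deriv hgsmooth X₀ Y₀]
    have h := derivG (f := fun s => w (s, Y₀)) (g := fun s => p (s, Y₀))
      (contDiff_sliceX hw Y₀) (contDiff_sliceX hp Y₀) X₀
    simp only [hgdef]
    rw [h]
    simp [hwπ]
  · rw [hgfun, dY_eq_deriv hgsmooth X₀ Y₀]
    have h := derivG (f := fun s => w (X₀, s)) (g := fun s => p (X₀, s))
      (contDiff_sliceY hw X₀) (contDiff_sliceY hp X₀) Y₀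
    simp only [hgdef]
    rw [h]
    simp [hwπ]
  · rw [hgfun, dX_eq_deriv (contDiff_dX hgsmooth) X₀ Y₀]
    have hslice : (fun s => dX g (s, Y₀)) = deriv (fun r => g (r, Y₀)) :=
      funext fun s => dX_eq_deriv hgsmooth s Y₀
    rw [hslice, hp₀, dX_eq_deriv hw X₀ Y₀]
    exact deriv2G (f := fun s => w (s, Y₀)) (g := fun s => p (s, Y₀))
      (contDiff_sliceX hw Y₀) (contDiff_sliceX hp Y₀) X₀ hwπ
end

section
/- Let c : ℝ → ℝ be smooth with c(v) ≥ c₀ > 0, and let u, w, z, p, q, x, t : ℝ² → ℝ be smooth functions solving the semilinear system. Let (X₀,Y₀) be a point where w(X₀,Y₀) = π, cos z(X₀,Y₀) > −1 and q(X₀,Y₀) > 0; write u₀ = u(X₀,Y₀), z₀ = z(X₀,Y₀), t₀ = t(X₀,Y₀). Suppose Φ is a C² function on a neighborhood of Y₀ with Φ(Y₀) = X₀ and w(Φ(Y),Y) = π for all Y near Y₀, and suppose φ is a C² function on a neighborhood of t₀ such that x(Φ(Y),Y) = φ(t(Φ(Y),Y)) for all Y near Y₀. Then φ'(t₀) = −c(u₀)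 and φ''(t₀) = −c'(u₀)·sin z₀/(1 + cos z₀). -/
lemma hasDerivAt_comp_curve (f : ℝ × ℝ → ℝ) (hf : ContDiff ℝ (⊤ : ℕ∞) f)
    {Φ : ℝ → ℝ} {Y d : ℝ} (hΦ : HasDerivAt Φ d Y) :
    HasDerivAt (fun s => f (Φ s, s)) (d * dX f (Φ Y, Y) + dY f (Φ Y, Y)) Y := by
  have hγ : HasDerivAt (fun s => ((Φ s, s) : ℝ × ℝ)) ((d, 1) : ℝ × ℝ) Y :=
    hΦ.prodMk (hasDerivAt_id Y)
  have hdf : DifferentiableAt ℝ f (Φ Y, Y) :=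
    (hf.differentiable (by simp)) (Φ Y, Y)
  have h : HasDerivAt (fun s => f (Φ s, s)) (fderiv ℝ f (Φ Y, Y) ((d, 1) : ℝ × ℝ)) Y :=
    HasFDerivAt.comp_hasDerivAt (f := fun s => ((Φ s, s) : ℝ × ℝ)) Y hdf.hasFDerivAt hγ
  have hv : fderiv ℝ f (Φ Y, Y) ((d, 1) : ℝ × ℝ)
      = d * dX f (Φ Y, Y) + dY f (Φ Y, Y) := by
    have hvv : ((d, (1:ℝ)) : ℝ × ℝ) = d • ((1:ℝ), (0:ℝ)) + ((0:ℝ), (1:ℝ)) := by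
      simp [Prod.ext_iff]
    rw [hvv, map_add, map_smul, smul_eq_mul]
    rfl
  rw [hv] at h
  exact h

/-- first and second derivatives of the singular curve
`x = φ(t)`, the image in the `(x,t)`-plane of the level set `{w = π}`. -/
theorem singular_curve_derivatives
    (c : ℝ → ℝ) (c₀ : ℝ) (hc₀ : 0 < c₀) (hc : ContDiff ℝ (⊤ : ℕ∞) c)
    (hclb : ∀ v, c₀ ≤ c v)
    (u w z p q x t : ℝ × ℝ → ℝ)
    (hsmooth : Smooth7 u w z p q x t)
    (hsys : SolvesSystem c u w z p q x t)
    (X₀ Y₀ : ℝ) (hwπ : w (X₀, Y₀) = Real.pi)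
    (hz : Real.cos (z (X₀, Y₀)) > -1) (hq : q (X₀, Y₀) > 0)
    (u₀ z₀ t₀ : ℝ)
    (hu₀ : u₀ = u (X₀, Y₀)) (hz₀ : z₀ = z (X₀, Y₀)) (ht₀ : t₀ = t (X₀, Y₀))
    (Φ : ℝ → ℝ) (δ₁ : ℝ) (hδ₁ : δ₁ > 0)
    (hΦreg : ContDiffOn ℝ 2 Φ (Metric.ball Y₀ δ₁))
    (hΦ₀ : Φ Y₀ = X₀)
    (hΦw : ∀ Y ∈ Metric.ball Y₀ δ₁, w (Φ Y, Y) = Real.pi)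
    (φ : ℝ → ℝ) (δ₂ : ℝ) (hδ₂ : δ₂ > 0)
    (hφreg : ContDiffOn ℝ 2 φ (Metric.ball t₀ δ₂))
    (hφ : ∀ Y ∈ Metric.ball Y₀ δ₁, x (Φ Y, Y) = φ (t (Φ Y, Y))) :
    deriv φ t₀ = -c u₀ ∧
    deriv (deriv φ) t₀ = -(deriv c u₀ * Real.sin z₀) / (1 + Real.cos z₀) := by
  obtain ⟨hsu, hsw, hsz, hsp, hsq, hsx, hst⟩ := hsmooth
  have hcpos : ∀ v, 0 < c v := fun v => lt_of_lt_of_le hc₀ (hclb v)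
  have hcne : ∀ v, c v ≠ 0 := fun v => ne_of_gt (hcpos v)
  have hY₀Ω : Y₀ ∈ Metric.ball Y₀ δ₁ := Metric.mem_ball_self hδ₁
  have hΩopen : IsOpen (Metric.ball Y₀ δ₁) := Metric.isOpen_ball
  -- Φ is differentiable on the ball
  have hΦdiff : ∀ Y ∈ Metric.ball Y₀ δ₁, HasDerivAt Φ (deriv Φ Y) Y := by
    intro Y hY
    exact ((hΦreg.contDiffAt (hΩopen.mem_nhds hY)).differentiableAt
      (by norm_num)).hasDerivAt
  -- abbreviation for the "speed" along the curve
  set τ : ℝ → ℝ := fun Y =>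
    (1 + Real.cos (z (Φ Y, Y))) * q (Φ Y, Y) / (4 * c (u (Φ Y, Y))) with hτdef
  -- derivative of t along the curve
  have hTder : ∀ Y ∈ Metric.ball Y₀ δ₁,
      HasDerivAt (fun s => t (Φ s, s)) (τ Y) Y := by
    intro Y hY
    have h := hasDerivAt_comp_curve t hst (hΦdiff Y hY)
    have h1 : dX t (Φ Y, Y) = 0 := by
      have h' := (hsys (Φ Y, Y)).2.2.2.2.2.2.2.2.1
      rw [h', hΦw Y hY]; simp
    have h2 := (hsys (Φ Y, Y)).2.2.2.2.2.2.2.2.2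
    rw [h1, h2] at h
    simpa [hτdef] using h
  -- derivative of x along the curve
  have hXder : ∀ Y ∈ Metric.ball Y₀ δ₁,
      HasDerivAt (fun s => x (Φ s, s)) (-c (u (Φ Y, Y)) * τ Y) Y := by
    intro Y hY
    have h := hasDerivAt_comp_curve x hsx (hΦdiff Y hY)
    have h1 : dX x (Φ Y, Y) = 0 := by
      have h' := (hsys (Φ Y, Y)).2.2.2.2.2.2.1
      rw [h', hΦw Y hY]; simp
    have h2 := (hsys (Φ Y, Y)).2.2.2.2.2.2.2.1
    rw [h1, h2] at h
    have h3 : -((1 + Real.cos (z (Φ Y, Y))) * q (Φ Y, Y)) / 4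
        = -c (u (Φ Y, Y)) * τ Y := by
      rw [hτdef]
      have hcne' := hcne (u (Φ Y, Y))
      field_simp
    rw [h3] at h
    simpa using h
  -- derivative of u along the curve
  have hUder : ∀ Y ∈ Metric.ball Y₀ δ₁,
      HasDerivAt (fun s => u (Φ s, s))
        (Real.sin (z (Φ Y, Y)) * q (Φ Y, Y) / (4 * c (u (Φ Y, Y)))) Y := by
    intro Y hY
    have h := hasDerivAt_comp_curve u hsu (hΦdiff Y hY)
    have h1 : dX u (Φ Y, Y) = 0 := by
      have h' := (hsys (Φ Y, Y)).1
      rw [h', hΦw Y hY]; simp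
    have h2 := (hsys (Φ Y, Y)).2.1
    rw [h1, h2] at h
    simpa using h
  -- basic values at Y₀
  have hz0eq : z (Φ Y₀, Y₀) = z₀ := by rw [hΦ₀, hz₀]
  have hq0eq : q (Φ Y₀, Y₀) = q (X₀, Y₀) := by rw [hΦ₀]
  have hu0eq : u (Φ Y₀, Y₀) = u₀ := by rw [hΦ₀, hu₀]
  have ht0eq : t (Φ Y₀, Y₀) = t₀ := by rw [hΦ₀, ht₀]
  have h1pc : (0:ℝ) < 1 + Real.cos z₀ := by rw [hz₀]; linarith
  have hτ₀pos : 0 < τ Y₀ := by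
    rw [hτdef]
    simp only [hz0eq, hq0eq, hu0eq]
    have := hcpos u₀
    positivity
  have hτ₀ne : τ Y₀ ≠ 0 := ne_of_gt hτ₀pos
  -- continuity of τ at Y₀
  have hΦc : ContinuousAt Φ Y₀ := (hΦdiff Y₀ hY₀Ω).continuousAt
  have hγc : ContinuousAt (fun s => ((Φ s, s) : ℝ × ℝ)) Y₀ :=
    hΦc.prodMk continuousAt_id
  have hτc : ContinuousAt τ Y₀ := by
    rw [hτdef]
    exact ContinuousAt.div
      ((((continuous_const.add (Real.continuous_cos.comp
        (hsz.continuous))).mul (hsq.continuous)).continuousAt).comp hγc)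
      (((continuous_const.mul ((hc.continuous).comp
        (hsu.continuous))).continuousAt).comp hγc)
      (by
        show (4:ℝ) * c (u (Φ Y₀, Y₀)) ≠ 0
        have h := hcpos (u (Φ Y₀, Y₀)); positivity)
  -- eventual facts near Y₀
  have hevΩ : ∀ᶠ Y in nhds Y₀, Y ∈ Metric.ball Y₀ δ₁ :=
    hΩopen.eventually_mem hY₀Ω
  have hTfc : ContinuousAt (fun s => t (Φ s, s)) Y₀ := (hTder Y₀ hY₀Ω).continuousAt
  have hevT : ∀ᶠ Y in nhds Y₀, t (Φ Y, Y) ∈ Metric.ball t₀ δ₂ := by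
    have : Metric.ball t₀ δ₂ ∈ nhds (t (Φ Y₀, Y₀)) := by
      rw [ht0eq]; exact Metric.ball_mem_nhds t₀ hδ₂
    exact hTfc this
  have hevτ : ∀ᶠ Y in nhds Y₀, τ Y ≠ 0 := hτc.eventually_ne hτ₀ne
  -- the key eventual identity
  have key : ∀ᶠ Y in nhds Y₀, deriv φ (t (Φ Y, Y)) = -c (u (Φ Y, Y)) := by
    filter_upwards [hevΩ, hevT, hevτ] with Y hYΩ hYb hτne
    have hφd : DifferentiableAt ℝ φ (t (Φ Y, Y)) :=
      (hφreg.contDiffAt (Metric.isOpen_ball.mem_nhds hYb)).differentiableAt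
        (by norm_num)
    have hcomp : HasDerivAt (fun s => φ (t (Φ s, s)))
        (deriv φ (t (Φ Y, Y)) * τ Y) Y :=
      HasDerivAt.comp Y hφd.hasDerivAt (hTder Y hYΩ)
    have heq : (fun s => φ (t (Φ s, s))) =ᶠ[nhds Y] fun s => x (Φ s, s) := by
      filter_upwards [hΩopen.eventually_mem hYΩ] with s hs using (hφ s hs).symm
    have hX' : HasDerivAt (fun s => φ (t (Φ s, s))) (-c (u (Φ Y, Y)) * τ Y) Y :=
      (hXder Y hYΩ).congr_of_eventuallyEq heq
    exact mul_right_cancel₀ hτne (hcomp.unique hX')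
  -- first conclusion
  have hfirst : deriv φ t₀ = -c u₀ := by
    have h := key.self_of_nhds
    rwa [ht0eq, hu0eq] at h
  refine ⟨hfirst, ?_⟩
  -- second derivative setup
  have hφ2 : ContDiffOn ℝ 1 (deriv φ) (Metric.ball t₀ δ₂) := by
    have := hφreg.deriv_of_isOpen Metric.isOpen_ball (m := 1) (by norm_num)
    exact this
  have hd2 : DifferentiableAt ℝ (deriv φ) t₀ :=
    (hφ2.contDiffAt (Metric.isOpen_ball.mem_nhds
      (Metric.mem_ball_self hδ₂))).differentiableAt one_ne_zero
  have hG : HasDerivAt (fun Y => deriv φ (t (Φ Y, Y)))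
      (deriv (deriv φ) t₀ * τ Y₀) Y₀ := by
    have hdd : HasDerivAt (deriv φ) (deriv (deriv φ) t₀) (t (Φ Y₀, Y₀)) := by
      rw [ht0eq]; exact hd2.hasDerivAt
    exact HasDerivAt.comp Y₀ hdd (hTder Y₀ hY₀Ω)
  have hH : HasDerivAt (fun Y => -c (u (Φ Y, Y)))
      (-(deriv c u₀ * (Real.sin (z (Φ Y₀, Y₀)) * q (Φ Y₀, Y₀)
        / (4 * c (u (Φ Y₀, Y₀)))))) Y₀ := by
    have hcd : HasDerivAt c (deriv c u₀) (u (Φ Y₀, Y₀)) := by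
      rw [hu0eq]
      exact ((hc.differentiable (by simp)) u₀).hasDerivAt
    exact (HasDerivAt.comp Y₀ hcd (hUder Y₀ hY₀Ω)).neg
  have hG' : HasDerivAt (fun Y => deriv φ (t (Φ Y, Y)))
      (-(deriv c u₀ * (Real.sin (z (Φ Y₀, Y₀)) * q (Φ Y₀, Y₀)
        / (4 * c (u (Φ Y₀, Y₀)))))) Y₀ :=
    hH.congr_of_eventuallyEq key
  have heq2 := hG.unique hG'
  -- solve for the second derivative
  have hqne : q (X₀, Y₀) ≠ 0 := ne_of_gt hq
  have hcune : c u₀ ≠ 0 := hcne u₀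
  have h1pcne : (1:ℝ) + Real.cos z₀ ≠ 0 := ne_of_gt h1pc
  rw [hτdef] at heq2
  simp only [hz0eq, hq0eq, hu0eq] at heq2
  rw [eq_div_iff h1pcne]
  field_simp at heq2
  have h4 : (deriv (deriv φ) t₀ * (1 + Real.cos z₀)) * q (X₀, Y₀)
      = (-(deriv c u₀ * Real.sin z₀)) * q (X₀, Y₀) := by linear_combination q (X₀, Y₀) * heq2
  exact mul_right_cancel₀ hqne h4
end

section
/- Let c : ℝ → ℝ be smooth with c(v) ≥ c₀ > 0, and let u, w, z, p, q, x, t : ℝ² → ℝ be smooth functions solving the semilinear system. Let (X₀,Y₀) be a point where w(X₀,Y₀) = π and w_X(X₀,Y₀) = 0, and write u₀ = u(X₀,Y₀), z₀ = z(X₀,Y₀), p₀ = p(X₀,Y₀), q₀ = q(X₀,Y₀). Then at (X₀,Y₀): u_X = 0; u_XX = 0; u_Y = (sin z₀)·q₀/(4c(u₀)); u_XY = −(c'(u₀)/(32c(u₀)³))·(1+cos z₀)·p₀·q₀; and u_XXX = −w_XX(X₀,Y₀)·p₀/(4c(u₀)). -/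
lemma hasDerivAt_lineX {f : ℝ × ℝ → ℝ} {a b : ℝ} (hf : DifferentiableAt ℝ f (a, b)) :
    HasDerivAt (fun s => f (s, b)) (dX f (a, b)) a :=
  hf.hasFDerivAt.comp_hasDerivAt a ((hasDerivAt_id a).prodMk (hasDerivAt_const a b))

lemma hasDerivAt_lineY {f : ℝ × ℝ → ℝ} {a b : ℝ} (hf : DifferentiableAt ℝ f (a, b)) :
    HasDerivAt (fun s => f (a, s)) (dY f (a, b)) b :=
  hf.hasFDerivAt.comp_hasDerivAt b ((hasDerivAt_const b a).prodMk (hasDerivAt_id b))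

/-- partial derivatives of `u` at a Type 2 point
(`w = π`, `w_X = 0`). -/
theorem u_derivatives_at_type2_point
    (c : ℝ → ℝ) (c₀ : ℝ) (hc₀ : 0 < c₀) (hc : ContDiff ℝ (⊤ : ℕ∞) c)
    (hclb : ∀ v, c₀ ≤ c v)
    (u w z p q x t : ℝ × ℝ → ℝ)
    (hsmooth : Smooth7 u w z p q x t)
    (hsys : SolvesSystem c u w z p q x t)
    (X₀ Y₀ : ℝ) (hwπ : w (X₀, Y₀) = Real.pi) (hwX : dX w (X₀, Y₀) = 0)
    (u₀ z₀ p₀ q₀ : ℝ)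
    (hu₀ : u₀ = u (X₀, Y₀)) (hz₀ : z₀ = z (X₀, Y₀))
    (hp₀ : p₀ = p (X₀, Y₀)) (hq₀ : q₀ = q (X₀, Y₀)) :
    dX u (X₀, Y₀) = 0 ∧
    dX (dX u) (X₀, Y₀) = 0 ∧
    dY u (X₀, Y₀) = Real.sin z₀ * q₀ / (4 * c u₀) ∧
    dY (dX u) (X₀, Y₀)
      = -(deriv c u₀ / (32 * c u₀ ^ 3)) * ((1 + Real.cos z₀) * p₀ * q₀) ∧
    dX (dX (dX u)) (X₀, Y₀) = -(dX (dX w) (X₀, Y₀) * p₀) / (4 * c u₀) := by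
  subst hu₀ hz₀ hp₀ hq₀
  obtain ⟨hu, hw, hz, hp, hq, hx, ht⟩ := hsmooth
  have hle1 : ((⊤ : ℕ∞) : WithTop ℕ∞) ≠ 0 := by simp
  have hcpos : ∀ v : ℝ, 0 < c v := fun v => lt_of_lt_of_le hc₀ (hclb v)
  have hc4 : ∀ P : ℝ × ℝ, (4 : ℝ) * c (u P) ≠ 0 := fun P => by
    have := hcpos (u P); positivity
  have hcu0 : c (u (X₀, Y₀)) ≠ 0 := ne_of_gt (hcpos _)
  -- The right-hand side of the first equation, as a function on the plane.
  set Fl : ℝ × ℝ → ℝ := fun P => Real.sin (w P) * p P / (4 * c (u P)) with hFl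
  have hdXu : dX u = Fl := funext fun P => (hsys P).1
  have hFsm : ContDiff ℝ (⊤ : ℕ∞) Fl :=
    ((Real.contDiff_sin.comp hw).mul hp).div (contDiff_const.mul (hc.comp hu)) hc4
  have hFd : Differentiable ℝ Fl := hFsm.differentiable hle1
  -- smoothness of dX w and dX Fl
  have hdXwsm : ContDiff ℝ (⊤ : ℕ∞) (dX w) :=
    (hw.fderiv_right (by exact_mod_cast le_top)).clm_apply contDiff_const
  have hdXFsm : ContDiff ℝ (⊤ : ℕ∞) (dX Fl) :=
    (hFsm.fderiv_right (by exact_mod_cast le_top)).clm_apply contDiff_const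
  -- one-variable function along the horizontal line
  set Hf : ℝ → ℝ := fun s => p (s, Y₀) / (4 * c (u (s, Y₀))) with hHfdef
  have hcurve : ContDiff ℝ (⊤ : ℕ∞) (fun s : ℝ => (s, Y₀)) := contDiff_id.prodMk contDiff_const
  have hHsm : ContDiff ℝ (⊤ : ℕ∞) Hf :=
    (hp.comp hcurve).div
      (contDiff_const.mul (hc.comp (hu.comp hcurve))) (fun s => hc4 (s, Y₀))
  have hH1sm : ContDiff ℝ (⊤ : ℕ∞) (deriv Hf) := by
    have := (contDiff_infty_iff_deriv.mp (by exact_mod_cast hHsm)).2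
    exact_mod_cast this
  set V : ℝ → ℝ := fun s => Real.sin (w (s, Y₀)) * Hf s with hV
  have hVeq : ∀ s : ℝ, Fl (s, Y₀) = V s := fun s => by
    simp only [hFl, hV, hHfdef, mul_div_assoc]
  -- derivative facts along the horizontal line, at an arbitrary point s
  have hWs : ∀ s : ℝ, HasDerivAt (fun τ => w (τ, Y₀)) (dX w (s, Y₀)) s := fun s =>
    hasDerivAt_lineX ((hw.differentiable hle1) _)
  have hHs : ∀ s : ℝ, HasDerivAt Hf (deriv Hf s) s := fun s =>
    ((hHsm.differentiable hle1) s).hasDerivAt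
  have hVs : ∀ s : ℝ, HasDerivAt V
      (Real.cos (w (s, Y₀)) * dX w (s, Y₀) * Hf s + Real.sin (w (s, Y₀)) * deriv Hf s) s :=
    fun s => ((hWs s).sin).mul (hHs s)
  have hlineF : ∀ s : ℝ, HasDerivAt (fun τ => Fl (τ, Y₀)) (dX Fl (s, Y₀)) s := fun s =>
    hasDerivAt_lineX (hFd _)
  have hlineV : ∀ s : ℝ, HasDerivAt V (dX Fl (s, Y₀)) s := fun s => by
    have h := hlineF s
    have : (fun τ => Fl (τ, Y₀)) = V := funext hVeq
    rwa [this] at h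
  have hdXFV : ∀ s : ℝ, dX Fl (s, Y₀)
      = Real.cos (w (s, Y₀)) * dX w (s, Y₀) * Hf s + Real.sin (w (s, Y₀)) * deriv Hf s :=
    fun s => (hlineV s).unique (hVs s)
  have hHfX₀ : Hf X₀ = p (X₀, Y₀) / (4 * c (u (X₀, Y₀))) := rfl
  refine ⟨?_, ?_, ?_, ?_, ?_⟩
  · -- dX u = 0
    rw [(hsys (X₀, Y₀)).1, hwπ, Real.sin_pi, zero_mul, zero_div]
  · -- dX dX u = 0
    rw [hdXu, hdXFV X₀, hwπ, hwX, Real.sin_pi, Real.cos_pi]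
    ring
  · -- dY u
    exact (hsys (X₀, Y₀)).2.1
  · -- dY dX u
    rw [hdXu]
    -- vertical line through (X₀, Y₀)
    have hWy : HasDerivAt (fun s => w (X₀, s)) (dY w (X₀, Y₀)) Y₀ :=
      hasDerivAt_lineY ((hw.differentiable hle1) _)
    have hcurve2 : ContDiff ℝ (⊤ : ℕ∞) (fun s : ℝ => ((X₀ : ℝ), s)) :=
      contDiff_const.prodMk contDiff_id
    have hH2sm : ContDiff ℝ (⊤ : ℕ∞) (fun s => p (X₀, s) / (4 * c (u (X₀, s)))) :=
      (hp.comp hcurve2).div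
        (contDiff_const.mul (hc.comp (hu.comp hcurve2))) (fun s => hc4 (X₀, s))
    have hH2 : HasDerivAt (fun s => p (X₀, s) / (4 * c (u (X₀, s))))
        (deriv (fun s => p (X₀, s) / (4 * c (u (X₀, s)))) Y₀) Y₀ :=
      ((hH2sm.differentiable hle1) Y₀).hasDerivAt
    have hmul2 : HasDerivAt (fun s => Real.sin (w (X₀, s)) * (p (X₀, s) / (4 * c (u (X₀, s)))))
        (Real.cos (w (X₀, Y₀)) * dY w (X₀, Y₀) * (p (X₀, Y₀) / (4 * c (u (X₀, Y₀)))) +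
          Real.sin (w (X₀, Y₀)) * deriv (fun s => p (X₀, s) / (4 * c (u (X₀, s)))) Y₀) Y₀ :=
      (hWy.sin).mul hH2
    have hlineFy : HasDerivAt (fun s => Fl (X₀, s)) (dY Fl (X₀, Y₀)) Y₀ :=
      hasDerivAt_lineY (hFd _)
    have heq2 : (fun s => Fl (X₀, s))
        = fun s => Real.sin (w (X₀, s)) * (p (X₀, s) / (4 * c (u (X₀, s)))) := by
      funext s; simp only [hFl, mul_div_assoc]
    rw [heq2] at hlineFy
    rw [hlineFy.unique hmul2, (hsys (X₀, Y₀)).2.2.1, hwπ, Real.sin_pi, Real.cos_pi]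
    field_simp
    ring
  · -- dX dX dX u
    rw [hdXu]
    have hline3 : HasDerivAt (fun s => dX Fl (s, Y₀)) (dX (dX Fl) (X₀, Y₀)) X₀ :=
      hasDerivAt_lineX ((hdXFsm.differentiable hle1) _)
    have hfun : (fun s => dX Fl (s, Y₀))
        = fun s => Real.cos (w (s, Y₀)) * dX w (s, Y₀) * Hf s
            + Real.sin (w (s, Y₀)) * deriv Hf s := funext hdXFV
    rw [hfun] at hline3
    -- second derivative of w along the line
    have hW1 : HasDerivAt (fun s => dX w (s, Y₀)) (dX (dX w) (X₀, Y₀)) X₀ :=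
      hasDerivAt_lineX ((hdXwsm.differentiable hle1) _)
    have hH1 : HasDerivAt (deriv Hf) (deriv (deriv Hf) X₀) X₀ :=
      ((hH1sm.differentiable hle1) X₀).hasDerivAt
    have hprod : HasDerivAt
        (fun s => Real.cos (w (s, Y₀)) * dX w (s, Y₀) * Hf s
            + Real.sin (w (s, Y₀)) * deriv Hf s)
        (((-Real.sin (w (X₀, Y₀)) * dX w (X₀, Y₀) * dX w (X₀, Y₀)
            + Real.cos (w (X₀, Y₀)) * dX (dX w) (X₀, Y₀)) * Hf X₀
          + Real.cos (w (X₀, Y₀)) * dX w (X₀, Y₀) * deriv Hf X₀)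
          + (Real.cos (w (X₀, Y₀)) * dX w (X₀, Y₀) * deriv Hf X₀
            + Real.sin (w (X₀, Y₀)) * deriv (deriv Hf) X₀)) X₀ :=
      ((((hWs X₀).cos).mul hW1).mul (hHs X₀)).add (((hWs X₀).sin).mul hH1)
    rw [hline3.unique hprod, hwπ, hwX, Real.sin_pi, Real.cos_pi, hHfX₀]
    field_simp
    ring
end

section
/- Let c : ℝ → ℝ be smooth with c(v) ≥ c₀ > 0, and let u, w, z, p, q, x, t : ℝ² → ℝ be smooth functions solving the semilinear system. Let (X₀,Y₀) be a point where w(X₀,Y₀) = π, w_X(X₀,Y₀) = 0, cos z(X₀,Y₀) > −1, p(X₀,Y₀) > 0, q(X₀,Y₀) > 0, c'(u(X₀,Y₀)) ≠ 0, and κ := −w_XX(X₀,Y₀)/(2·w_Y(X₀,Y₀)) > 0. Write t₀ = t(X₀,Y₀). Then there exist a neighborhood N of (X₀,Y₀) and ε > 0 such that: (a) for every τ with t₀ − ε < τ < t₀, no point (X,Y) ∈ N satisfies both w(X,Y) = π and t(X,Y) = τ; (b) the only point (X,Y) ∈ N with w(X,Y) = π and t(X,Y) = t₀ is (X₀,Y₀);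 (c) for every τ with t₀ < τ < t₀ + ε, there are exactly two points (X,Y) ∈ N with w(X,Y) = π and t(X,Y) = τ. -/
lemma clm_decomp (L : ℝ × ℝ →L[ℝ] ℝ) (v : ℝ × ℝ) :
    L v = v.1 * L (1, 0) + v.2 * L (0, 1) := by
  have hv : v = v.1 • ((1:ℝ), (0:ℝ)) + v.2 • ((0:ℝ), (1:ℝ)) := by
    ext <;> simp
  rw [hv, map_add, map_smul, map_smul]; simp [smul_eq_mul]

lemma hasDerivAt_comp2 {h : ℝ × ℝ → ℝ} (hh : ContDiff ℝ (⊤:ℕ∞) h)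
    {γ : ℝ → ℝ × ℝ} {v : ℝ × ℝ} {X : ℝ} (hγ : HasDerivAt γ v X) :
    HasDerivAt (fun s => h (γ s)) (v.1 * dX h (γ X) + v.2 * dY h (γ X)) X := by
  have hfd : HasFDerivAt h (fderiv ℝ h (γ X)) (γ X) :=
    (hh.differentiable (by simp) (γ X)).hasFDerivAt
  have := hfd.comp_hasDerivAt X hγ
  simpa [dX, dY, clm_decomp (fderiv ℝ h (γ X)) v, Function.comp_def] using this

lemma contDiff_dX_s15 {h : ℝ × ℝ → ℝ} (hh : ContDiff ℝ (⊤:ℕ∞) h) :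
    ContDiff ℝ (⊤:ℕ∞) (dX h) := by
  have h1 : ContDiff ℝ (⊤:ℕ∞) (fun pr : (ℝ×ℝ) × (ℝ×ℝ) => (fderiv ℝ h pr.1 : ℝ×ℝ →L[ℝ] ℝ) pr.2) :=
    hh.contDiff_fderiv_apply (by exact_mod_cast le_top)
  exact h1.comp (contDiff_id.prodMk contDiff_const)

lemma contDiff_dY {h : ℝ × ℝ → ℝ} (hh : ContDiff ℝ (⊤:ℕ∞) h) :
    ContDiff ℝ (⊤:ℕ∞) (dY h) := by
  have h1 : ContDiff ℝ (⊤:ℕ∞) (fun pr : (ℝ×ℝ) × (ℝ×ℝ) => (fderiv ℝ h pr.1 : ℝ×ℝ →L[ℝ] ℝ) pr.2) :=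
    hh.contDiff_fderiv_apply (by exact_mod_cast le_top)
  exact h1.comp (contDiff_id.prodMk contDiff_const)

/-- at a Type 2 singular point, for times slightly before `t₀`
there are no singular points, at `t₀` exactly one, and slightly after `t₀`
exactly two. -/
theorem two_singular_curves_originate
    (c : ℝ → ℝ) (c₀ : ℝ) (hc₀ : 0 < c₀) (hc : ContDiff ℝ (⊤ : ℕ∞) c)
    (hclb : ∀ v, c₀ ≤ c v)
    (u w z p q x t : ℝ × ℝ → ℝ)
    (hsmooth : Smooth7 u w z p q x t)
    (hsys : SolvesSystem c u w z p q x t)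
    (X₀ Y₀ : ℝ) (hwπ : w (X₀, Y₀) = Real.pi) (hwX : dX w (X₀, Y₀) = 0)
    (hz : Real.cos (z (X₀, Y₀)) > -1)
    (hp : p (X₀, Y₀) > 0) (hq : q (X₀, Y₀) > 0)
    (hc' : deriv c (u (X₀, Y₀)) ≠ 0)
    (κ : ℝ) (hκ : κ = -dX (dX w) (X₀, Y₀) / (2 * dY w (X₀, Y₀))) (hκpos : κ > 0)
    (t₀ : ℝ) (ht₀ : t₀ = t (X₀, Y₀)) :
    ∃ N : Set (ℝ × ℝ), IsOpen N ∧ (X₀, Y₀) ∈ N ∧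
      ∃ ε : ℝ, ε > 0 ∧
        (∀ τ : ℝ, t₀ - ε < τ → τ < t₀ →
          ∀ P ∈ N, ¬(w P = Real.pi ∧ t P = τ)) ∧
        ({P : ℝ × ℝ | P ∈ N ∧ w P = Real.pi ∧ t P = t₀} = {(X₀, Y₀)}) ∧
        (∀ τ : ℝ, t₀ < τ → τ < t₀ + ε →
          ∃ P₁ P₂ : ℝ × ℝ, P₁ ≠ P₂ ∧
            {P : ℝ × ℝ | P ∈ N ∧ w P = Real.pi ∧ t P = τ} = {P₁, P₂}) := by
  obtain ⟨hu, hw, hz', hp', hq', hx', ht⟩ := hsmooth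
  set P₀ : ℝ × ℝ := (X₀, Y₀) with hP₀def
  have hone : (1 : WithTop ℕ∞) ≤ ((⊤:ℕ∞) : WithTop ℕ∞) := by exact_mod_cast le_top
  have hn0 : ((⊤:ℕ∞) : WithTop ℕ∞) ≠ 0 := by simp
  have hcu : 0 < c (u P₀) := lt_of_lt_of_le hc₀ (hclb _)
  have hcz : 0 < 1 + Real.cos (z P₀) := by linarith
  -- dY w P₀ ≠ 0
  have hwY : dY w P₀ ≠ 0 := by
    have h := (hsys P₀).2.2.1
    rw [hwπ, Real.cos_pi] at h
    rw [h]
    refine mul_ne_zero (mul_ne_zero ?_ ?_) (ne_of_gt hq)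
    · exact div_ne_zero hc' (by positivity)
    · intro hcontra; nlinarith [hz]
  -- dY t P₀ > 0
  have htY : 0 < dY t P₀ := by
    rw [(hsys P₀).2.2.2.2.2.2.2.2.2]
    positivity
  -- the map F and its invertible derivative
  set F : ℝ × ℝ → ℝ × ℝ := fun P => (P.1, w P) with hFdef
  set L : ℝ × ℝ →L[ℝ] ℝ := fderiv ℝ w P₀ with hLdef
  set k : ℝ := dY w P₀ with hkdef
  have hL10 : L (1, 0) = dX w P₀ := rfl
  have hL01 : L (0, 1) = dY w P₀ := rfl
  set f₁ : (ℝ × ℝ) →L[ℝ] (ℝ × ℝ) := (ContinuousLinearMap.fst ℝ ℝ ℝ).prod L with hf₁def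
  set A : (ℝ × ℝ) →L[ℝ] ℝ :=
    L.comp ((ContinuousLinearMap.inl ℝ ℝ ℝ).comp (ContinuousLinearMap.fst ℝ ℝ ℝ)) with hAdef
  set f₂ : (ℝ × ℝ) →L[ℝ] (ℝ × ℝ) :=
    (ContinuousLinearMap.fst ℝ ℝ ℝ).prod (k⁻¹ • (ContinuousLinearMap.snd ℝ ℝ ℝ - A)) with hf₂def
  have hAv : ∀ v : ℝ × ℝ, A v = v.1 * L (1, 0) := by
    intro v
    have : A v = L (v.1, 0) := rfl
    rw [this, clm_decomp L (v.1, 0)]; simp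
  have h₁ : Function.LeftInverse f₂ f₁ := by
    intro v
    have h2 : f₂ (f₁ v) = (v.1, k⁻¹ * (L v - v.1 * L (1,0))) := by
      simp [hf₂def, hf₁def, hAv, smul_eq_mul]
    rw [h2, clm_decomp L v, hL01]
    have : k⁻¹ * (v.1 * L (1,0) + v.2 * k - v.1 * L (1,0)) = v.2 := by
      field_simp
      ring
    ext
    · rfl
    · simpa using this
  have h₂ : Function.RightInverse f₂ f₁ := by
    intro v
    have h2 : f₂ v = (v.1, k⁻¹ * (v.2 - v.1 * L (1,0))) := by
      simp [hf₂def, hAv, smul_eq_mul]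
    have h3 : f₁ (f₂ v) = (v.1, L (v.1, k⁻¹ * (v.2 - v.1 * L (1,0)))) := by
      rw [h2]; rfl
    rw [h3, clm_decomp L (v.1, k⁻¹ * (v.2 - v.1 * L (1,0)))]
    simp only [hL01]
    ext
    · rfl
    · show v.1 * L (1,0) + k⁻¹ * (v.2 - v.1 * L (1,0)) * k = v.2
      field_simp
      ring
  set e : (ℝ × ℝ) ≃L[ℝ] (ℝ × ℝ) := ContinuousLinearEquiv.equivOfInverse f₁ f₂ h₁ h₂ with hedef
  have hecoe : (e : (ℝ × ℝ) →L[ℝ] (ℝ × ℝ)) = f₁ := rfl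
  have hF' : HasFDerivAt F (e : (ℝ × ℝ) →L[ℝ] (ℝ × ℝ)) P₀ := by
    rw [hecoe, hf₁def]
    exact (hasFDerivAt_fst).prodMk
      ((hw.differentiable (by simp) P₀).hasFDerivAt)
  have hFc : ContDiffAt ℝ (⊤:ℕ∞) F P₀ := (contDiff_fst.prodMk hw).contDiffAt
  set pf := hFc.toOpenPartialHomeomorph F hF' hn0 with hpfdef
  have hcoe : (pf : ℝ × ℝ → ℝ × ℝ) = F := rfl
  have hsrc : P₀ ∈ pf.source := hFc.mem_toOpenPartialHomeomorph_source hF' hn0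
  have htgt : F P₀ ∈ pf.target := hFc.image_mem_toOpenPartialHomeomorph_target hF' hn0
  have hFP₀ : F P₀ = (X₀, Real.pi) := by simp [hFdef, hwπ]; rfl
  have hinv : ContDiffAt ℝ (⊤:ℕ∞) pf.symm (F P₀) := hFc.to_localInverse hF' hn0
  obtain ⟨V, hVnhds, hVs⟩ := hinv.contDiffOn (m := 1) hone (by simp)
  -- the implicit curve
  set γ : ℝ → ℝ × ℝ := fun X => pf.symm (X, Real.pi) with hγdef
  have hγ₀ : γ X₀ = P₀ := by
    have : pf.symm (F P₀) = P₀ := by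
      have := pf.left_inv hsrc
      rwa [hcoe] at this
    rw [hγdef]; simp only [hFP₀] at this; exact this
  -- eventual facts near X₀ for the map X ↦ (X, π)
  set j : ℝ → ℝ × ℝ := fun X => (X, Real.pi) with hjdef
  have hjcont : Continuous j := by fun_prop
  have hjX₀ : j X₀ = F P₀ := by rw [hFP₀]
  have hWnhds : pf.target ∩ interior V ∈ nhds (F P₀) :=
    Filter.inter_mem (pf.open_target.mem_nhds htgt)
      (mem_interior_iff_mem_nhds.mpr hVnhds |> (isOpen_interior.mem_nhds))
  have hev1 : ∀ᶠ X in nhds X₀, j X ∈ pf.target ∩ interior V := by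
    refine (hjcont.continuousAt (x := X₀)).eventually_mem ?_
    rw [hjX₀]; exact hWnhds
  -- differentiability of γ and key derivative identity, eventually
  have hsymm_diff : ∀ X, j X ∈ pf.target ∩ interior V → DifferentiableAt ℝ γ X := by
    intro X hX
    have hdsymm : DifferentiableAt ℝ pf.symm (j X) := by
      refine ((hVs.differentiableOn one_ne_zero).mono interior_subset).differentiableAt ?_
      exact isOpen_interior.mem_nhds hX.2
    exact hdsymm.comp X ((differentiableAt_fun_id).prodMk (differentiableAt_const _))
  have hγ_first : ∀ X, j X ∈ pf.target ∩ interior V → (γ X).1 = X ∧ w (γ X) = Real.pi := by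
    intro X hX
    have h1 : pf (γ X) = j X := pf.right_inv hX.1
    rw [hcoe] at h1
    constructor
    · exact congrArg Prod.fst h1
    · exact congrArg Prod.snd h1
  have hγ_src : ∀ X, j X ∈ pf.target ∩ interior V → γ X ∈ pf.source := fun X hX =>
    pf.map_target hX.1
  -- continuity of dY w ∘ γ at X₀, nonvanishing eventually
  have hρcont : ContinuousAt (fun X => dY w (γ X)) X₀ := by
    have hγcont : ContinuousAt γ X₀ := by
      have := hsymm_diff X₀ (hev1.self_of_nhds)
      exact this.continuousAt
    exact ((contDiff_dY hw).continuous.continuousAt).comp hγcont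
  have hev2 : ∀ᶠ X in nhds X₀, dY w (γ X) ≠ 0 := by
    have : dY w (γ X₀) ≠ 0 := by rw [hγ₀]; exact hwY
    exact hρcont.eventually_ne this
  obtain ⟨δ, hδpos, hδ⟩ := Metric.eventually_nhds_iff.mp (hev1.and hev2)
  set η : ℝ → ℝ := fun X => -(dX w (γ X)) / dY w (γ X) * dY t (γ X) with hηdef
  set φ : ℝ → ℝ := fun X => t (γ X) with hφdef
  have hball : ∀ X ∈ Metric.ball X₀ δ, (j X ∈ pf.target ∩ interior V) ∧ dY w (γ X) ≠ 0 := by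
    intro X hX
    exact hδ (by simpa [Metric.mem_ball] using hX)
  have hkey : ∀ X ∈ Metric.ball X₀ δ,
      HasDerivAt γ (1, -(dX w (γ X)) / dY w (γ X)) X ∧ HasDerivAt φ (η X) X := by
    intro X hX
    obtain ⟨hXW, hXρ⟩ := hball X hX
    have hγ' : HasDerivAt γ (deriv γ X) X := (hsymm_diff X hXW).hasDerivAt
    set v := deriv γ X with hvdef
    have hfst : HasDerivAt (fun s => (γ s).1) v.1 X := by
      have := (ContinuousLinearMap.fst ℝ ℝ ℝ).hasFDerivAt.comp_hasDerivAt X hγ'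
      simpa [Function.comp_def] using this
    have heq1 : (fun s => (γ s).1) =ᶠ[nhds X] (fun s => s) := by
      filter_upwards [Metric.isOpen_ball.mem_nhds hX] with s hs
      exact (hγ_first s (hball s hs).1).1
    have hv1 : v.1 = 1 := by
      have h1 : HasDerivAt (fun s : ℝ => s) v.1 X := hfst.congr_of_eventuallyEq heq1.symm
      exact h1.unique (hasDerivAt_id X)
    have hwc : HasDerivAt (fun s => w (γ s)) (v.1 * dX w (γ X) + v.2 * dY w (γ X)) X :=
      hasDerivAt_comp2 hw hγ'
    have heq2 : (fun s => w (γ s)) =ᶠ[nhds X] (fun _ => Real.pi) := by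
      filter_upwards [Metric.isOpen_ball.mem_nhds hX] with s hs
      exact (hγ_first s (hball s hs).1).2
    have hzero : v.1 * dX w (γ X) + v.2 * dY w (γ X) = 0 := by
      have h1 : HasDerivAt (fun _ : ℝ => Real.pi) (v.1 * dX w (γ X) + v.2 * dY w (γ X)) X :=
        hwc.congr_of_eventuallyEq heq2.symm
      exact h1.unique (hasDerivAt_const X Real.pi)
    have hv2 : v.2 = -(dX w (γ X)) / dY w (γ X) := by
      rw [hv1, one_mul] at hzero
      field_simp
      linarith
    have hγv : HasDerivAt γ (1, -(dX w (γ X)) / dY w (γ X)) X := by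
      have : v = (1, -(dX w (γ X)) / dY w (γ X)) := by
        ext
        · exact hv1
        · exact hv2
      rwa [this] at hγ'
    refine ⟨hγv, ?_⟩
    have hφ' := hasDerivAt_comp2 ht hγv
    have hdXt : dX t (γ X) = 0 := by
      have h := (hsys (γ X)).2.2.2.2.2.2.2.2.1
      rw [(hγ_first X hXW).2, Real.cos_pi] at h
      simpa using h
    simpa [hηdef, hdXt] using hφ'
  have hX₀ball : X₀ ∈ Metric.ball X₀ δ := Metric.mem_ball_self hδpos
  have hγ0 : HasDerivAt γ ((1 : ℝ), (0 : ℝ)) X₀ := by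
    have := (hkey X₀ hX₀ball).1
    rw [hγ₀, hwX] at this
    simpa using this
  have hη₀ : η X₀ = 0 := by simp [hηdef, hγ₀, hwX]
  have hφ₀ : φ X₀ = t₀ := by simp [hφdef, hγ₀, ← ht₀]
  -- derivative of η at X₀
  have hA : HasDerivAt (fun X => dX w (γ X)) (dX (dX w) P₀) X₀ := by
    have := hasDerivAt_comp2 (contDiff_dX_s15 hw) hγ0
    simpa [hγ₀, dX] using this
  have hB : HasDerivAt (fun X => dY w (γ X)) (dX (dY w) P₀) X₀ := by
    have := hasDerivAt_comp2 (contDiff_dY hw) hγ0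
    simpa [hγ₀, dX] using this
  have hC : HasDerivAt (fun X => dY t (γ X)) (dX (dY t) P₀) X₀ := by
    have := hasDerivAt_comp2 (contDiff_dY ht) hγ0
    simpa [hγ₀, dX] using this
  have hBne : dY w (γ X₀) ≠ 0 := by rw [hγ₀]; exact hwY
  have hη' : HasDerivAt η (2 * κ * dY t P₀) X₀ := by
    have h1 := ((hA.neg).div hB hBne).mul hC
    have heqval : (-dX (dX w) P₀ * dY w (γ X₀) - -(dX w (γ X₀)) * dX (dY w) P₀) /
          dY w (γ X₀) ^ 2 * dY t (γ X₀) +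
          -(dX w (γ X₀)) / dY w (γ X₀) * dX (dY t) P₀ = 2 * κ * dY t P₀ := by
      rw [hγ₀, hwX, hκ]
      rw [← hkdef]
      field_simp
      ring
    replace h1 := h1.congr_deriv heqval
    exact h1
  have hKpos : 0 < 2 * κ * dY t P₀ := mul_pos (mul_pos two_pos hκpos) htY
  -- sign of η near X₀ from the positive derivative
  have hslope := hasDerivAt_iff_tendsto_slope.mp hη'
  have hev3 : ∀ᶠ X in nhdsWithin X₀ {X₀}ᶜ, 0 < slope η X₀ X :=
    hslope.eventually (eventually_gt_nhds hKpos)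
  rw [eventually_nhdsWithin_iff] at hev3
  obtain ⟨δs, hδspos, hδs⟩ := Metric.eventually_nhds_iff.mp hev3
  have hslope_pos : ∀ X, dist X X₀ < δs → X ≠ X₀ → 0 < η X / (X - X₀) := by
    intro X h1 h2
    have := hδs h1 (by simpa using h2)
    rwa [slope_def_field, hη₀, sub_zero] at this
  have hηpos : ∀ X, X₀ < X → dist X X₀ < δs → 0 < η X := by
    intro X h1 h2
    have hs := hslope_pos X h2 (ne_of_gt h1)
    rcases div_pos_iff.mp hs with ⟨h3, _⟩ | ⟨_, h4⟩
    · exact h3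
    · linarith
  have hηneg : ∀ X, X < X₀ → dist X X₀ < δs → η X < 0 := by
    intro X h1 h2
    have hs := hslope_pos X h2 (ne_of_lt h1)
    rcases div_pos_iff.mp hs with ⟨_, h3⟩ | ⟨h4, _⟩
    · linarith
    · exact h4
  -- the interval
  set ρ : ℝ := min δ δs / 2 with hρdef
  have hρpos : 0 < ρ := by positivity
  set a : ℝ := X₀ - ρ with hadef
  set b : ℝ := X₀ + ρ with hbdef
  have hab : a < X₀ ∧ X₀ < b := ⟨by simp [hadef]; linarith, by simp [hbdef]; linarith⟩
  have hsub : ∀ X ∈ Set.Icc a b, X ∈ Metric.ball X₀ δ ∧ dist X X₀ < δs := by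
    intro X hX
    have h1 : |X - X₀| ≤ ρ := by
      rw [abs_le]
      constructor <;> [linarith [hX.1]; linarith [hX.2]]
    have h2 : ρ < min δ δs := by
      have : 0 < min δ δs := lt_min hδpos hδspos
      rw [hρdef]; linarith
    constructor
    · rw [Metric.mem_ball, Real.dist_eq]
      exact lt_of_le_of_lt h1 (lt_of_lt_of_le h2 (min_le_left _ _))
    · rw [Real.dist_eq]
      exact lt_of_le_of_lt h1 (lt_of_lt_of_le h2 (min_le_right _ _))
  have hcont : ContinuousOn φ (Set.Icc a b) := by
    intro X hX
    exact ((hkey X (hsub X hX).1).2).differentiableAt.continuousAt.continuousWithinAt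
  have hIccR : Set.Icc X₀ b ⊆ Set.Icc a b := Set.Icc_subset_Icc (le_of_lt hab.1) le_rfl
  have hIccL : Set.Icc a X₀ ⊆ Set.Icc a b := Set.Icc_subset_Icc le_rfl (le_of_lt hab.2)
  have hmono : StrictMonoOn φ (Set.Icc X₀ b) := by
    apply strictMonoOn_of_deriv_pos (convex_Icc X₀ b) (hcont.mono hIccR)
    intro X hX
    rw [interior_Icc] at hX
    have hXmem : X ∈ Set.Icc a b := hIccR ⟨le_of_lt hX.1, le_of_lt hX.2⟩
    rw [((hkey X (hsub X hXmem).1).2).deriv]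
    exact hηpos X hX.1 (hsub X hXmem).2
  have hanti : StrictAntiOn φ (Set.Icc a X₀) := by
    apply strictAntiOn_of_deriv_neg (convex_Icc a X₀) (hcont.mono hIccL)
    intro X hX
    rw [interior_Icc] at hX
    have hXmem : X ∈ Set.Icc a b := hIccL ⟨le_of_lt hX.1, le_of_lt hX.2⟩
    rw [((hkey X (hsub X hXmem).1).2).deriv]
    exact hηneg X hX.2 (hsub X hXmem).2
  have hφa : t₀ < φ a := by
    have := hanti (Set.left_mem_Icc.mpr (le_of_lt hab.1))
      (Set.right_mem_Icc.mpr (le_of_lt hab.1)) hab.1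
    rwa [hφ₀] at this
  have hφb : t₀ < φ b := by
    have := hmono (Set.left_mem_Icc.mpr (le_of_lt hab.2))
      (Set.right_mem_Icc.mpr (le_of_lt hab.2)) hab.2
    rwa [hφ₀] at this
  -- minimality of t₀ on the interval
  have hmin : ∀ X ∈ Set.Ioo a b, X ≠ X₀ → t₀ < φ X := by
    intro X hX hne
    rcases lt_or_gt_of_ne hne with h | h
    · have := hanti ⟨le_of_lt hX.1, le_of_lt h⟩ (Set.right_mem_Icc.mpr (le_of_lt hab.1)) h
      rwa [hφ₀] at this
    · have := hmono (Set.left_mem_Icc.mpr (le_of_lt hab.2)) ⟨le_of_lt h, le_of_lt hX.2⟩ h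
      rwa [hφ₀] at this
  -- the neighborhood and ε
  set N : Set (ℝ × ℝ) := pf.source ∩ {P : ℝ × ℝ | P.1 ∈ Set.Ioo a b} with hNdef
  set ε : ℝ := min (φ a - t₀) (φ b - t₀) with hεdef
  have hεpos : 0 < ε := lt_min (by linarith) (by linarith)
  have hIoo : Set.Ioo a b ⊆ Set.Icc a b := Set.Ioo_subset_Icc_self
  -- characterization of singular points in N
  have hchar : ∀ (τ : ℝ) (P : ℝ × ℝ),
      (P ∈ N ∧ w P = Real.pi ∧ t P = τ) ↔ ∃ X ∈ Set.Ioo a b, φ X = τ ∧ P = γ X := by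
    intro τ P
    constructor
    · rintro ⟨⟨hPsrc, hPX⟩, hPw, hPt⟩
      refine ⟨P.1, hPX, ?_, ?_⟩
      · have hback : γ P.1 = P := by
          have h1 := pf.left_inv hPsrc
          rw [hcoe] at h1
          have h2 : F P = (P.1, Real.pi) := by rw [hFdef]; simp [hPw]
          rw [h2] at h1
          exact h1
        rw [hφdef]
        simp only [hback]
        exact hPt
      · have h1 := pf.left_inv hPsrc
        rw [hcoe] at h1
        have h2 : F P = (P.1, Real.pi) := by rw [hFdef]; simp [hPw]
        rw [h2] at h1
        exact h1.symm
    · rintro ⟨X, hX, hφX, rfl⟩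
      have hXball : X ∈ Metric.ball X₀ δ := (hsub X (hIoo hX)).1
      have hXW := (hball X hXball).1
      refine ⟨⟨hγ_src X hXW, ?_⟩, (hγ_first X hXW).2, hφX⟩
      show (γ X).1 ∈ Set.Ioo a b
      rw [(hγ_first X hXW).1]
      exact hX
  refine ⟨N, pf.open_source.inter (isOpen_Ioo.preimage continuous_fst),
    ⟨hsrc, by show X₀ ∈ Set.Ioo a b; exact ⟨hab.1, hab.2⟩⟩, ε, hεpos, ?_, ?_, ?_⟩
  · -- (a) no singular points before t₀
    intro τ _ hτ2 P hPN hcon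
    obtain ⟨X, hX, hφX, _⟩ := (hchar τ P).mp ⟨hPN, hcon.1, hcon.2⟩
    rcases eq_or_ne X X₀ with rfl | hne
    · rw [hφ₀] at hφX; linarith
    · have := hmin X hX hne; linarith
  · -- (b) exactly one singular point at t₀
    ext P
    simp only [Set.mem_setOf_eq, Set.mem_singleton_iff]
    constructor
    · rintro ⟨hPN, hPw, hPt⟩
      obtain ⟨X, hX, hφX, rfl⟩ := (hchar t₀ P).mp ⟨hPN, hPw, hPt⟩
      have hXX₀ : X = X₀ := by
        by_contra hne
        have := hmin X hX hne
        linarith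
      rw [hXX₀, hγ₀]
    · rintro rfl
      have := (hchar t₀ P₀).mpr ⟨X₀, ⟨hab.1, hab.2⟩, by rw [hφ₀], hγ₀.symm⟩
      exact this
  · -- (c) exactly two singular points after t₀
    intro τ hτ1 hτ2
    have hτa : τ < φ a := by
      have : ε ≤ φ a - t₀ := min_le_left _ _
      linarith
    have hτb : τ < φ b := by
      have : ε ≤ φ b - t₀ := min_le_right _ _
      linarith
    -- find the two roots
    obtain ⟨X₁, hX₁mem, hX₁⟩ :=
      intermediate_value_Ioo' (le_of_lt hab.1) (hcont.mono hIccL)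
        (by rw [hφ₀]; exact ⟨hτ1, hτa⟩)
    obtain ⟨X₂, hX₂mem, hX₂⟩ :=
      intermediate_value_Ioo (le_of_lt hab.2) (hcont.mono hIccR)
        (by rw [hφ₀]; exact ⟨hτ1, hτb⟩)
    have hX₁ab : X₁ ∈ Set.Ioo a b := ⟨hX₁mem.1, lt_trans hX₁mem.2 hab.2⟩
    have hX₂ab : X₂ ∈ Set.Ioo a b := ⟨lt_trans hab.1 hX₂mem.1, hX₂mem.2⟩
    have h1W := (hball X₁ (hsub X₁ (hIoo hX₁ab)).1).1
    have h2W := (hball X₂ (hsub X₂ (hIoo hX₂ab)).1).1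
    refine ⟨γ X₁, γ X₂, ?_, ?_⟩
    · intro hcon
      have heq : X₁ = X₂ := by
        have e1 := (hγ_first X₁ h1W).1
        have e2 := (hγ_first X₂ h2W).1
        rw [← e1, ← e2, hcon]
      have hlt : X₁ < X₂ := lt_trans hX₁mem.2 hX₂mem.1
      exact absurd heq (ne_of_lt hlt)
    · ext P
      simp only [Set.mem_setOf_eq, Set.mem_insert_iff, Set.mem_singleton_iff]
      constructor
      · rintro ⟨hPN, hPw, hPt⟩
        obtain ⟨X, hX, hφX, rfl⟩ := (hchar τ P).mp ⟨hPN, hPw, hPt⟩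
        have hne : X ≠ X₀ := by
          intro h
          rw [h, hφ₀] at hφX
          linarith
        rcases lt_or_gt_of_ne hne with h | h
        · left
          have : X = X₁ := by
            apply hanti.injOn ⟨le_of_lt hX.1, le_of_lt h⟩
              ⟨le_of_lt hX₁mem.1, le_of_lt hX₁mem.2⟩
            rw [hφX, hX₁]
          rw [this]
        · right
          have : X = X₂ := by
            apply hmono.injOn ⟨le_of_lt h, le_of_lt hX.2⟩
              ⟨le_of_lt hX₂mem.1, le_of_lt hX₂mem.2⟩
            rw [hφX, hX₂]
          rw [this]
      · rintro (rfl | rfl)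
        · exact (hchar τ (γ X₁)).mpr ⟨X₁, hX₁ab, hX₁, rfl⟩
        · exact (hchar τ (γ X₂)).mpr ⟨X₂, hX₂ab, hX₂, rfl⟩
end
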